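/- arXiv:2006.06724 — 5 statements merged into one kernel-verified Lean document; each statement's English description precedes it below -/
import Mathlib

section
/- (Joyal bijection) For every positive integer n there exists a bijection J from the set of all functions f : {1,…,n} → {1,…,n} to the set of doubly rooted trees on n vertices such that for every such f, the symmetric difference of the undirected edge multiset E(f) of the functional graph of f and the edge set of the tree J(f) has size at most 2·|M(f)| − 1, where M(f) is the core of f. -/
open scoped Classical

/-- The core of a self-map: the set of points lying on a cycle,
i.e. `x` with `f^[j] x = x` for some `j ≥ 1`. -/
def inCore {V : Type*} (f : V → V) (x : V) : Prop := ∃ j ≥ 1, f^[j] x = x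

/-- The undirected edge multiset of the functional graph of `f` : the multiset of
unordered pairs `{x, f x}`, with multiplicity, loops allowed. -/
def funEdges {n : ℕ} (f : Fin n → Fin n) : Multiset (Sym2 (Fin n)) :=
  Finset.univ.val.map (fun x => s(x, f x))

/-- The edge multiset of a simple graph on `Fin n` (each edge counted once). -/
noncomputable def graphEdges {n : ℕ} (G : SimpleGraph (Fin n)) : Multiset (Sym2 (Fin n)) :=
  (G.edgeSet.toFinite.toFinset).val

/-- Size of the multiset symmetric difference `(A - B) + (B - A)`. -/
noncomputable def msdCard {α : Type*} (A B : Multiset α) : ℕ :=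
  Multiset.card ((A - B) + (B - A))

/-- A doubly rooted tree on `n` vertices: a tree on vertex set `Fin n`
together with an ordered pair of roots. -/
structure DoublyRootedTree (n : ℕ) where
  tree : SimpleGraph (Fin n)
  isTree : tree.IsTree
  r1 : Fin n
  r2 : Fin n

namespace JoyalAux

open Function SimpleGraph Finset

variable {n : ℕ}

/-! ### Generic dynamics lemmas -/

lemma exists_iterate_mem_periodicPts (f : Fin n → Fin n) (x : Fin n) :
    ∃ m, f^[m] x ∈ periodicPts f := by
  have : ¬ Function.Injective (fun m : ℕ => f^[m] x) := fun h => (Finite.of_injective _ h).false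
  rw [Function.not_injective_iff] at this
  obtain ⟨a, b, hab, hne⟩ := this
  rcases hne.lt_or_gt with hlt | hlt
  · exact ⟨a, mk_mem_periodicPts (Nat.sub_pos_of_lt hlt) (by
      show f^[b - a] (f^[a] x) = f^[a] x
      rw [← Function.iterate_add_apply, Nat.sub_add_cancel hlt.le, hab])⟩
  · exact ⟨b, mk_mem_periodicPts (Nat.sub_pos_of_lt hlt) (by
      show f^[a - b] (f^[b] x) = f^[b] x
      rw [← Function.iterate_add_apply, Nat.sub_add_cancel hlt.le]
      exact hab)⟩

lemma periodicPts_nonempty (f : Fin n → Fin n) (hn : 1 ≤ n) : (periodicPts f).Nonempty := by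
  obtain ⟨m, hm⟩ := exists_iterate_mem_periodicPts f ⟨0, hn⟩
  exact ⟨_, hm⟩

lemma iterate_periodic_multiple {f : Fin n → Fin n} {x : Fin n} {j : ℕ} (hj : f^[j] x = x) :
    ∀ t, f^[j * t] x = x := by
  intro t
  induction t with
  | zero => simp
  | succ t ih => rw [Nat.mul_succ, Function.iterate_add_apply, hj, ih]

/-- cancel injectivity: if iterates agree and all iterates are in a set where `f` is injective. -/
lemma periodic_of_injOn_mapsTo {f : Fin n → Fin n} {S : Set (Fin n)}
    (hinj : Set.InjOn f S) (hmaps : Set.MapsTo f S S) {x : Fin n} (hx : x ∈ S) :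
    x ∈ periodicPts f := by
  have hiter : ∀ m, f^[m] x ∈ S := by
    intro m; induction m with
    | zero => simpa
    | succ m ih => rw [Function.iterate_succ_apply']; exact hmaps ih
  have : ¬ Function.Injective (fun m : ℕ => f^[m] x) := fun h => (Finite.of_injective _ h).false
  rw [Function.not_injective_iff] at this
  obtain ⟨a, b, hab, hne⟩ := this
  wlog hlt : a < b generalizing a b
  · exact this b a hab.symm hne.symm (hne.lt_or_gt.resolve_left hlt)
  -- cancel a times
  set d := b - a with hd
  have key : ∀ c, f^[c] x = f^[c + d] x → f^[d] x = x := by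
    intro c
    induction c with
    | zero => intro h; simpa using h.symm
    | succ c ih =>
      intro h
      apply ih
      have h1 : f (f^[c] x) = f (f^[c + d] x) := by
        have h' := h
        rw [show c + 1 + d = (c + d) + 1 by omega, Function.iterate_succ_apply',
          Function.iterate_succ_apply'] at h'
        exact h'
      exact hinj (hiter c) (hiter (c + d)) h1
  have := key a (by rw [hd, Nat.add_sub_cancel' hlt.le]; exact hab)
  exact mk_mem_periodicPts (Nat.sub_pos_of_lt hlt) this

/-! ### Tree functions -/

/-- `p` is a tree function with root `r`. -/
def IsTreeFun (p : Fin n → Fin n) (r : Fin n) : Prop :=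
  p r = r ∧ ∀ x, ∃ m, p^[m] x = r

noncomputable def depth (p : Fin n → Fin n) (r : Fin n) (x : Fin n) : ℕ :=
  sInf {m | p^[m] x = r}

def graphOf (p : Fin n → Fin n) : SimpleGraph (Fin n) :=
  SimpleGraph.fromRel (fun x y => p x = y)

section TreeFun

variable {p : Fin n → Fin n} {r x y : Fin n}

lemma iterate_depth (h : IsTreeFun p r) (x : Fin n) : p^[depth p r x] x = r :=
  Nat.sInf_mem (h.2 x)

lemma depth_min {m : ℕ} (hm : m < depth p r x) : p^[m] x ≠ r :=
  Nat.notMem_of_lt_sInf hm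

lemma depth_root : depth p r r = 0 :=
  Nat.sInf_eq_zero.2 (Or.inl (by simp [Set.mem_setOf_eq]))

lemma eq_root_of_depth_zero (h : IsTreeFun p r) (hd : depth p r x = 0) : x = r := by
  have := iterate_depth h x
  rw [hd] at this
  simpa using this

lemma depth_succ (h : IsTreeFun p r) (hx : x ≠ r) :
    depth p r x = depth p r (p x) + 1 := by
  have h1 : depth p r x ≠ 0 := by
    intro h0
    exact hx (by simpa [h0] using iterate_depth h x)
  have h2 : p^[depth p r x - 1] (p x) = r := by
    have he : (depth p r x - 1) + 1 = depth p r x := by omega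
    rw [← Function.iterate_succ_apply, Nat.succ_eq_add_one, he]
    exact iterate_depth h x
  have hle : depth p r (p x) ≤ depth p r x - 1 := Nat.sInf_le h2
  have hge : depth p r x ≤ depth p r (p x) + 1 := by
    apply Nat.sInf_le
    show p^[depth p r (p x) + 1] x = r
    rw [Function.iterate_succ_apply]
    exact iterate_depth h (p x)
  omega

lemma eq_root_of_fixed (h : IsTreeFun p r) (hfix : p x = x) : x = r := by
  by_contra hx
  have := depth_succ h hx
  rw [hfix] at this
  omega

lemma iterate_root (h : IsTreeFun p r) (s : ℕ) : p^[s] r = r :=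
  Function.iterate_fixed h.1 s

lemma eq_root_of_periodic (h : IsTreeFun p r) {j : ℕ} (hj : 1 ≤ j) (hper : p^[j] x = x) :
    x = r := by
  obtain ⟨m, hm⟩ := h.2 x
  have hx : x = p^[j * (m + 1)] x := (iterate_periodic_multiple hper (m+1)).symm
  have hge : m ≤ j * (m+1) := by nlinarith
  calc x = p^[j * (m+1)] x := hx
    _ = p^[j*(m+1) - m] (p^[m] x) := by rw [← Function.iterate_add_apply]; congr 1; omega
    _ = p^[j*(m+1) - m] r := by rw [hm]
    _ = r := iterate_root h _

lemma graphOf_adj : (graphOf p).Adj x y ↔ x ≠ y ∧ (p x = y ∨ p y = x) := by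
  simp [graphOf, SimpleGraph.fromRel_adj]

lemma parent_ne (h : IsTreeFun p r) (hx : x ≠ r) : p x ≠ x :=
  fun hf => hx (eq_root_of_fixed h hf)

lemma adj_parent (h : IsTreeFun p r) (hx : x ≠ r) : (graphOf p).Adj x (p x) :=
  graphOf_adj.2 ⟨fun he => parent_ne h hx he.symm, Or.inl rfl⟩

lemma depth_adj (h : IsTreeFun p r) (hadj : (graphOf p).Adj x y) :
    depth p r x = depth p r y + 1 ∨ depth p r y = depth p r x + 1 := by
  rw [graphOf_adj] at hadj
  obtain ⟨hne, hc | hc⟩ := hadj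
  · left
    have hx : x ≠ r := by
      rintro rfl
      exact hne (h.1.symm.trans hc)
    rw [depth_succ h hx, hc]
  · right
    have hy : y ≠ r := by
      rintro rfl
      exact hne (h.1.symm.trans hc).symm
    rw [depth_succ h hy, hc]

lemma parent_of_adj_lt (h : IsTreeFun p r) (hadj : (graphOf p).Adj x y)
    (hd : depth p r y < depth p r x) : p x = y := by
  rw [graphOf_adj] at hadj
  obtain ⟨hne, hc | hc⟩ := hadj
  · exact hc
  · exfalso
    have hy : y ≠ r := by
      rintro rfl
      exact hne (h.1.symm.trans hc).symm
    have := depth_succ h hy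
    rw [hc] at this
    omega

lemma reachable_root (h : IsTreeFun p r) (x : Fin n) : (graphOf p).Reachable x r := by
  generalize hd : depth p r x = d
  induction d generalizing x with
  | zero =>
    have : x = r := by simpa [hd] using iterate_depth h x
    exact this ▸ SimpleGraph.Reachable.refl x
  | succ d ih =>
    have hx : x ≠ r := by
      rintro rfl
      rw [depth_root] at hd; omega
    exact (adj_parent h hx).reachable.trans
      (ih (p x) (by have := depth_succ h hx; omega))

lemma connected_graphOf (h : IsTreeFun p r) (hn : 1 ≤ n) : (graphOf p).Connected := by
  rw [SimpleGraph.connected_iff]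
  refine ⟨fun x y => (reachable_root h x).trans (reachable_root h y).symm, ⟨⟨0, hn⟩⟩⟩

lemma depth_le_walk (h : IsTreeFun p r) {x y : Fin n} (w : (graphOf p).Walk x y) :
    depth p r x ≤ depth p r y + w.length := by
  induction w with
  | nil => simp
  | cons hadj w ih =>
    have := depth_adj h hadj
    simp only [SimpleGraph.Walk.length_cons]
    omega

lemma dist_eq_depth (h : IsTreeFun p r) (hn : 1 ≤ n) (x : Fin n) :
    (graphOf p).dist x r = depth p r x := by
  apply le_antisymm
  · -- induction on depth
    generalize hd : depth p r x = d
    induction d generalizing x with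
    | zero =>
      have : x = r := by simpa [hd] using iterate_depth h x
      simp [this]
    | succ d ih =>
      have hx : x ≠ r := by
        rintro rfl; rw [depth_root] at hd; omega
      have hpd : depth p r (p x) = d := by have := depth_succ h hx; omega
      calc (graphOf p).dist x r ≤ (graphOf p).dist x (p x) + (graphOf p).dist (p x) r :=
            (connected_graphOf h hn).dist_triangle
        _ ≤ 1 + d := by
            have h1 : (graphOf p).dist x (p x) = 1 :=
              SimpleGraph.dist_eq_one_iff_adj.2 (adj_parent h hx)
            have h2 := ih (p x) hpd
            omega
        _ = d + 1 := by omega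
  · obtain ⟨w, hw⟩ := ((reachable_root h x)).exists_walk_length_eq_dist
    have := depth_le_walk h w
    rw [hw] at this
    simpa [depth_root] using this

lemma parent_unique_closer (h : IsTreeFun p r) (hadj : (graphOf p).Adj x y)
    (hd : (graphOf p).dist y r < (graphOf p).dist x r) (hn : 1 ≤ n) : p x = y := by
  rw [dist_eq_depth h hn, dist_eq_depth h hn] at hd
  exact parent_of_adj_lt h hadj hd

lemma walk_support_getElem? {G : SimpleGraph (Fin n)} {a b : Fin n} (w : G.Walk a b) :
    ∀ i, i ≤ w.length → w.support[i]? = some (w.getVert i) := by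
  induction w with
  | nil =>
    intro i hi
    obtain rfl : i = 0 := Nat.le_zero.mp hi
    simp [SimpleGraph.Walk.getVert]
  | cons hadj w ih =>
    intro i hi
    cases i with
    | zero => simp [SimpleGraph.Walk.getVert_zero]
    | succ i =>
      simp only [SimpleGraph.Walk.support_cons, List.getElem?_cons_succ,
        SimpleGraph.Walk.getVert_cons_succ]
      exact ih i (by simpa [SimpleGraph.Walk.length_cons] using hi)

lemma isAcyclic_graphOf (h : IsTreeFun p r) : (graphOf p).IsAcyclic := by
  intro v c hc
  -- pick a vertex of maximal depth on the cycle
  have hsupne : c.support ≠ [] := SimpleGraph.Walk.support_ne_nil c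
  obtain ⟨u, hu, hmax⟩ : ∃ u ∈ c.support, ∀ z ∈ c.support, depth p r z ≤ depth p r u := by
    classical
    obtain ⟨u, hu1, hu2⟩ := Finset.exists_max_image c.support.toFinset (depth p r)
      ⟨v, by simp [SimpleGraph.Walk.start_mem_support]⟩
    exact ⟨u, by simpa using hu1, fun z hz => hu2 z (by simpa using hz)⟩
  set c' := c.rotate u hu with hc'def
  have hc' : c'.IsCycle := hc.rotate hu
  have hmem : ∀ z ∈ c'.support, z ∈ c.support := by
    intro z hz
    rcases List.mem_cons.1 (by rwa [SimpleGraph.Walk.support_eq_cons c'] at hz) with rfl | hz'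
    · exact hu
    · have := (SimpleGraph.Walk.support_rotate c u hu).mem_iff.1 hz'
      exact List.mem_of_mem_tail this
  have hlen : 3 ≤ c'.length := hc'.three_le_length
  have h0 : 0 < c'.length := by omega
  have h1lt : 1 < c'.length := by omega
  -- the two neighbours of u on the cycle
  have hadj1 : (graphOf p).Adj u (c'.getVert 1) := by
    simpa using c'.adj_getVert_succ h0
  have hadj2 : (graphOf p).Adj (c'.getVert (c'.length - 1)) u := by
    have := c'.adj_getVert_succ (i := c'.length - 1) (by omega)
    have he : c'.length - 1 + 1 = c'.length := by omega
    rw [he, SimpleGraph.Walk.getVert_length] at this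
    exact this
  have hm1 : c'.getVert 1 ∈ c.support :=
    hmem _ (SimpleGraph.Walk.mem_support_iff_exists_getVert.2 ⟨1, rfl, by omega⟩)
  have hm2 : c'.getVert (c'.length - 1) ∈ c.support :=
    hmem _ (SimpleGraph.Walk.mem_support_iff_exists_getVert.2 ⟨c'.length - 1, rfl, by omega⟩)
  have hp1 : p u = c'.getVert 1 := by
    apply parent_of_adj_lt h hadj1
    rcases depth_adj h hadj1 with h' | h'
    · omega
    · exact absurd (hmax _ hm1) (by omega)
  have hp2 : p u = c'.getVert (c'.length - 1) := by
    apply parent_of_adj_lt h hadj2.symm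
    rcases depth_adj h hadj2 with h' | h'
    · exact absurd (hmax _ hm2) (by omega)
    · omega
  -- but getVert 1 and getVert (length - 1) are distinct on a cycle
  have hnodup : c'.support.tail.Nodup := hc'.2
  have hget : ∀ i, i ≤ c'.length → c'.support[i]? = some (c'.getVert i) :=
    walk_support_getElem? c'
  have htail : ∀ i, i + 1 ≤ c'.length → c'.support.tail[i]? = some (c'.getVert (i + 1)) := by
    intro i hi
    have := hget (i + 1) hi
    rw [SimpleGraph.Walk.support_eq_cons c'] at this
    simpa using this
  have hne : c'.getVert 1 ≠ c'.getVert (c'.length - 1) := by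
    intro heq
    have e1 : c'.support.tail[0]? = some (c'.getVert 1) := htail 0 (by omega)
    have e2 : c'.support.tail[c'.length - 2]? = some (c'.getVert (c'.length - 1)) := by
      have := htail (c'.length - 2) (by omega)
      rw [show c'.length - 2 + 1 = c'.length - 1 by omega] at this
      exact this
    have hlen' : c'.support.tail.length = c'.length := by
      have := SimpleGraph.Walk.length_support c'
      have h2 := SimpleGraph.Walk.support_eq_cons c'
      rw [h2] at this
      simpa using this
    have : (0 : ℕ) = c'.length - 2 :=
      (List.getElem?_inj (i := 0) (by omega) hnodup).1 (by rw [e1, e2, heq])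
    omega
  exact hne (hp1 ▸ hp2 ▸ rfl)

lemma isTree_graphOf (h : IsTreeFun p r) (hn : 1 ≤ n) : (graphOf p).IsTree :=
  ⟨connected_graphOf h hn, isAcyclic_graphOf h⟩

lemma mem_edgeSet_graphOf (h : IsTreeFun p r) {e : Sym2 (Fin n)} :
    e ∈ (graphOf p).edgeSet ↔ ∃ x, x ≠ r ∧ e = s(x, p x) := by
  constructor
  · intro he
    induction e with
    | h x y =>
      rw [SimpleGraph.mem_edgeSet, graphOf_adj] at he
      obtain ⟨hne, hc | hc⟩ := he
      · refine ⟨x, ?_, by rw [hc]⟩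
        rintro rfl
        exact hne (h.1.symm.trans hc)
      · refine ⟨y, ?_, by rw [hc, Sym2.eq_swap]⟩
        rintro rfl
        exact hne (h.1.symm.trans hc).symm
  · rintro ⟨x, hx, rfl⟩
    exact (SimpleGraph.mem_edgeSet _).2 (adj_parent h hx)

lemma edge_injOn (h : IsTreeFun p r) {x y : Fin n} (hx : x ≠ r) (hy : y ≠ r)
    (hxy : s(x, p x) = s(y, p y)) : x = y := by
  rw [Sym2.eq_iff] at hxy
  rcases hxy with ⟨h1, _⟩ | ⟨h1, h2⟩
  · exact h1
  · -- x = p y and p x = y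
    by_contra hne
    have hdx := depth_succ h hx
    have hdy := depth_succ h hy
    rw [h2] at hdx
    rw [← h1] at hdy
    omega

lemma graphEdges_graphOf (h : IsTreeFun p r) :
    ((graphOf p).edgeSet.toFinite.toFinset).val
      = (Finset.univ.erase r).val.map (fun x => s(x, p x)) := by
  have hnd : ((Finset.univ.erase r).val.map (fun x => s(x, p x))).Nodup := by
    apply Multiset.Nodup.map_on
    · intro x hx y hy hxy
      exact edge_injOn h (Finset.mem_erase.1 (show x ∈ Finset.univ.erase r from hx)).1
        (Finset.mem_erase.1 (show y ∈ Finset.univ.erase r from hy)).1 hxy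
    · exact (Finset.univ.erase r).nodup
  refine Multiset.Nodup.ext (Finset.nodup _) hnd |>.2 ?_
  intro e
  rw [Finset.mem_val, Set.Finite.mem_toFinset, mem_edgeSet_graphOf h]
  simp only [Multiset.mem_map, Finset.mem_val, Finset.mem_erase, Finset.mem_univ, and_true]
  constructor
  · rintro ⟨x, hx, rfl⟩; exact ⟨x, hx, rfl⟩
  · rintro ⟨x, hx, rfl⟩; exact ⟨x, hx, rfl⟩

lemma card_edgeFinset_graphOf (h : IsTreeFun p r) :
    Multiset.card ((graphOf p).edgeSet.toFinite.toFinset).val = n - 1 := by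
  rw [graphEdges_graphOf h]
  rw [Multiset.card_map]
  have : (Finset.univ.erase r).card = n - 1 := by
    rw [Finset.card_erase_of_mem (Finset.mem_univ r)]
    simp
  simpa using this

end TreeFun

/-! ### rank / enumeration lemmas -/

/-- The rank of `x` in a finset: number of smaller elements. -/
def enumIdx (s : Finset (Fin n)) (x : Fin n) : ℕ := (s.filter (fun y => y < x)).card

lemma enumIdx_orderEmbOfFin (s : Finset (Fin n)) (i : Fin s.card) :
    enumIdx s (s.orderEmbOfFin rfl i) = i := by
  unfold enumIdx
  have himg : s.filter (fun y => y < s.orderEmbOfFin rfl i)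
      = (Finset.Iio i).image (fun j => s.orderEmbOfFin rfl j) := by
    ext y
    simp only [Finset.mem_filter, Finset.mem_image, Finset.mem_Iio]
    constructor
    · rintro ⟨hys, hlt⟩
      have : y ∈ Set.range (s.orderEmbOfFin rfl) := by
        rw [Finset.range_orderEmbOfFin]; exact hys
      obtain ⟨j, rfl⟩ := this
      exact ⟨j, (s.orderEmbOfFin rfl).strictMono.lt_iff_lt.1 hlt, rfl⟩
    · rintro ⟨j, hj, rfl⟩
      exact ⟨Finset.orderEmbOfFin_mem s rfl j, (s.orderEmbOfFin rfl).strictMono hj⟩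
  rw [himg, Finset.card_image_of_injective _ (s.orderEmbOfFin rfl).injective, Fin.card_Iio]

lemma enumIdx_lt_card {s : Finset (Fin n)} {x : Fin n} (hx : x ∈ s) :
    enumIdx s x < s.card := by
  apply Finset.card_lt_card
  constructor
  · intro y hy
    exact (Finset.mem_filter.1 hy).1
  · intro hsub
    have := hsub hx
    simp at this

lemma orderEmbOfFin_enumIdx {s : Finset (Fin n)} {x : Fin n} (hx : x ∈ s) :
    s.orderEmbOfFin rfl ⟨enumIdx s x, enumIdx_lt_card hx⟩ = x := by
  have : x ∈ Set.range (s.orderEmbOfFin rfl) := by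
    rw [Finset.range_orderEmbOfFin]; exact hx
  obtain ⟨j, rfl⟩ := this
  congr 1
  ext
  simp [enumIdx_orderEmbOfFin]

/-! ### The core of `f` as a finset, and the Joyal tree function -/

noncomputable def coreF (f : Fin n → Fin n) : Finset (Fin n) :=
  (periodicPts f).toFinite.toFinset

lemma mem_coreF {f : Fin n → Fin n} {x : Fin n} : x ∈ coreF f ↔ x ∈ periodicPts f :=
  Set.Finite.mem_toFinset _

lemma coreF_nonempty (f : Fin n → Fin n) (hn : 1 ≤ n) : 0 < (coreF f).card := by
  obtain ⟨x, hx⟩ := periodicPts_nonempty f hn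
  exact Finset.card_pos.2 ⟨x, mem_coreF.2 hx⟩

lemma coreF_injOn {f : Fin n → Fin n} {x y : Fin n} (hx : x ∈ coreF f) (hy : y ∈ coreF f)
    (hxy : f x = f y) : x = y :=
  (Function.bijOn_periodicPts f).injOn (mem_coreF.1 hx) (mem_coreF.1 hy) hxy

lemma coreF_mapsTo {f : Fin n → Fin n} {x : Fin n} (hx : x ∈ coreF f) : f x ∈ coreF f :=
  mem_coreF.2 ((Function.bijOn_periodicPts f).mapsTo (mem_coreF.1 hx))

lemma coreF_surjOn {f : Fin n → Fin n} {y : Fin n} (hy : y ∈ coreF f) :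
    ∃ x ∈ coreF f, f x = y := by
  obtain ⟨x, hx, hxy⟩ := (Function.bijOn_periodicPts f).surjOn (mem_coreF.1 hy)
  exact ⟨x, mem_coreF.2 hx, hxy⟩

section Phi

variable (f : Fin n → Fin n) (hk : 0 < (coreF f).card)

/-- The increasing enumeration of the core (constant `≥ k-1`). -/
noncomputable def aseq (i : ℕ) : Fin n :=
  (coreF f).orderEmbOfFin rfl ⟨min i ((coreF f).card - 1), by omega⟩

/-- The Joyal path sequence: image of the increasing enumeration under `f`. -/
noncomputable def bseq (i : ℕ) : Fin n := f (aseq f hk i)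

/-- Index of `x` in the `bseq` enumeration. -/
noncomputable def bidx (x : Fin n) : ℕ := sInf {i | bseq f hk i = x}

/-- The Joyal tree function associated to `f`. -/
noncomputable def pmap (x : Fin n) : Fin n :=
  if x ∈ coreF f then
    (if bidx f hk x = (coreF f).card - 1 then x else bseq f hk (bidx f hk x + 1))
  else f x

variable {f hk}

lemma aseq_mem (i : ℕ) : aseq f hk i ∈ coreF f := Finset.orderEmbOfFin_mem _ rfl _

lemma aseq_min (i : ℕ) (hi : i ≤ (coreF f).card - 1) :
    aseq f hk i = (coreF f).orderEmbOfFin rfl ⟨i, by omega⟩ := by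
  unfold aseq
  congr 1
  ext
  simp [Nat.min_eq_left hi]

lemma aseq_inj {i j : ℕ} (hi : i ≤ (coreF f).card - 1) (hj : j ≤ (coreF f).card - 1)
    (hij : aseq f hk i = aseq f hk j) : i = j := by
  rw [aseq_min i hi, aseq_min j hj] at hij
  have := (coreF f).orderEmbOfFin rfl |>.injective hij
  simpa using congrArg Fin.val this

lemma aseq_surj {y : Fin n} (hy : y ∈ coreF f) :
    ∃ j ≤ (coreF f).card - 1, aseq f hk j = y := by
  have : y ∈ Set.range ((coreF f).orderEmbOfFin rfl) := by
    rw [Finset.range_orderEmbOfFin]; exact hy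
  obtain ⟨j, rfl⟩ := this
  refine ⟨j, by omega, ?_⟩
  rw [aseq_min j (by omega)]

lemma bseq_mem (i : ℕ) : bseq f hk i ∈ coreF f := coreF_mapsTo (aseq_mem i)

lemma bseq_inj {i j : ℕ} (hi : i ≤ (coreF f).card - 1) (hj : j ≤ (coreF f).card - 1)
    (hij : bseq f hk i = bseq f hk j) : i = j :=
  aseq_inj hi hj (coreF_injOn (aseq_mem i) (aseq_mem j) hij)

lemma bseq_surj {y : Fin n} (hy : y ∈ coreF f) :
    ∃ j ≤ (coreF f).card - 1, bseq f hk j = y := by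
  obtain ⟨x, hx, hxy⟩ := coreF_surjOn hy
  obtain ⟨j, hj, hja⟩ := aseq_surj (hk := hk) hx
  exact ⟨j, hj, by rw [bseq, hja, hxy]⟩

lemma bseq_min (i : ℕ) : bseq f hk i = bseq f hk (min i ((coreF f).card - 1)) := by
  unfold bseq aseq
  congr 2
  ext
  simp only [Nat.min_def]
  split
  · rfl
  · split <;> omega

lemma bidx_bseq {j : ℕ} (hj : j ≤ (coreF f).card - 1) : bidx f hk (bseq f hk j) = j := by
  unfold bidx
  have hmem : j ∈ {i | bseq f hk i = bseq f hk j} := rfl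
  refine le_antisymm (Nat.sInf_le hmem) ?_
  by_contra hlt
  push_neg at hlt
  have hmem' := Nat.sInf_mem (Set.nonempty_of_mem hmem)
  set i := sInf {i | bseq f hk i = bseq f hk j}
  have hij : bseq f hk i = bseq f hk j := hmem'
  have : i = j := bseq_inj (by omega) hj hij
  omega

lemma bidx_le {x : Fin n} (hx : x ∈ coreF f) : bidx f hk x ≤ (coreF f).card - 1 := by
  obtain ⟨j, hj, rfl⟩ := bseq_surj (hk := hk) hx
  rw [bidx_bseq hj]; exact hj

lemma bseq_bidx {x : Fin n} (hx : x ∈ coreF f) : bseq f hk (bidx f hk x) = x := by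
  obtain ⟨j, hj, rfl⟩ := bseq_surj (hk := hk) hx
  rw [bidx_bseq hj]

lemma pmap_not_mem {x : Fin n} (hx : x ∉ coreF f) : pmap f hk x = f x := by
  simp [pmap, hx]

lemma pmap_bseq {j : ℕ} (hj : j < (coreF f).card - 1) :
    pmap f hk (bseq f hk j) = bseq f hk (j + 1) := by
  rw [pmap, if_pos (bseq_mem j), bidx_bseq hj.le, if_neg (by omega)]

lemma pmap_bseq_last : pmap f hk (bseq f hk ((coreF f).card - 1)) = bseq f hk ((coreF f).card - 1) := by
  rw [pmap, if_pos (bseq_mem _), bidx_bseq le_rfl, if_pos rfl]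

lemma pmap_iterate_bseq {j d : ℕ} (hjd : j + d ≤ (coreF f).card - 1) :
    (pmap f hk)^[d] (bseq f hk j) = bseq f hk (j + d) := by
  induction d generalizing j with
  | zero => simp
  | succ d ih =>
    rw [Function.iterate_succ_apply, pmap_bseq (by omega)]
    rw [show j + (d+1) = (j+1) + d by omega]
    exact ih (by omega)

lemma pmap_iterate_b0 (m : ℕ) :
    (pmap f hk)^[m] (bseq f hk 0) = bseq f hk (min m ((coreF f).card - 1)) := by
  induction m with
  | zero => simp
  | succ m ih =>
    rw [Function.iterate_succ_apply', ih]
    rcases lt_or_ge m ((coreF f).card - 1) with hm | hm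
    · rw [Nat.min_eq_left hm.le, pmap_bseq hm, Nat.min_eq_left (by omega)]
    · rw [Nat.min_eq_right hm, pmap_bseq_last, Nat.min_eq_right (by omega)]

/-- first entry time into the core -/
noncomputable def entT (f : Fin n → Fin n) (x : Fin n) : ℕ := sInf {m | f^[m] x ∈ coreF f}

lemma entT_spec (f : Fin n → Fin n) (x : Fin n) : f^[entT f x] x ∈ coreF f := by
  obtain ⟨m, hm⟩ := exists_iterate_mem_periodicPts f x
  exact Nat.sInf_mem (⟨m, mem_coreF.2 hm⟩ : {m | f^[m] x ∈ coreF f}.Nonempty)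

lemma entT_step {f : Fin n → Fin n} {x : Fin n} (hx : x ∉ coreF f) :
    entT f (f x) < entT f x := by
  have h0 : entT f x ≠ 0 := by
    intro h0
    have := entT_spec f x
    rw [h0] at this
    exact hx this
  have h1 : f^[entT f x - 1] (f x) ∈ coreF f := by
    rw [← Function.iterate_succ_apply, Nat.succ_eq_add_one, show entT f x - 1 + 1 = entT f x by omega]
    exact entT_spec f x
  have h2 : entT f (f x) ≤ entT f x - 1 :=
    Nat.sInf_le (show entT f x - 1 ∈ {m | f^[m] (f x) ∈ coreF f} from h1)
  omega

lemma pmap_reach_coreF (x : Fin n) : ∃ m, (pmap f hk)^[m] x ∈ coreF f := by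
  generalize he : entT f x = E
  induction E using Nat.strong_induction_on generalizing x with
  | _ E ih =>
    by_cases hx : x ∈ coreF f
    · exact ⟨0, hx⟩
    · obtain ⟨m, hm⟩ := ih (entT f (f x)) (he ▸ entT_step hx) (f x) rfl
      refine ⟨m + 1, ?_⟩
      rw [Function.iterate_add_apply, Function.iterate_one, pmap_not_mem hx]
      exact hm

lemma pmap_isTreeFun : IsTreeFun (pmap f hk) (bseq f hk ((coreF f).card - 1)) := by
  constructor
  · exact pmap_bseq_last
  · intro x
    obtain ⟨m, hm⟩ := pmap_reach_coreF (hk := hk) x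
    obtain ⟨j, hj, hb⟩ := bseq_surj (hk := hk) hm
    refine ⟨m + ((coreF f).card - 1 - j), ?_⟩
    rw [Nat.add_comm, Function.iterate_add_apply, ← hb,
      pmap_iterate_bseq (by omega), show j + ((coreF f).card - 1 - j) = (coreF f).card - 1 by omega]

end Phi

/-! ### The Joyal map `phi` -/

noncomputable def phi (hn : 1 ≤ n) (f : Fin n → Fin n) : DoublyRootedTree n where
  tree := graphOf (pmap f (coreF_nonempty f hn))
  isTree := isTree_graphOf (pmap_isTreeFun (hk := coreF_nonempty f hn)) hn
  r1 := bseq f (coreF_nonempty f hn) 0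
  r2 := bseq f (coreF_nonempty f hn) ((coreF f).card - 1)

/-! ### The inverse map `psi` -/

noncomputable def parentMap (T : SimpleGraph (Fin n)) (r2 : Fin n) (x : Fin n) : Fin n :=
  if h : ∃ y, T.Adj x y ∧ T.dist y r2 < T.dist x r2 then h.choose else x

section Psi

variable {T : SimpleGraph (Fin n)} {r2 x : Fin n}

lemma parentMap_exists (hT : T.Connected) (hx : x ≠ r2) :
    ∃ y, T.Adj x y ∧ T.dist y r2 < T.dist x r2 := by
  have hd : T.dist x r2 ≠ 0 := (hT.pos_dist_of_ne hx).ne'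
  obtain ⟨w, hw⟩ := (hT x r2).exists_walk_length_eq_dist
  cases w with
  | nil => exact absurd hx (by simp)
  | @cons _ y _ hadj w' =>
    refine ⟨y, hadj, ?_⟩
    have := SimpleGraph.dist_le w'
    rw [SimpleGraph.Walk.length_cons] at hw
    omega

lemma parentMap_spec (hT : T.Connected) (hx : x ≠ r2) :
    T.Adj x (parentMap T r2 x) ∧ T.dist (parentMap T r2 x) r2 < T.dist x r2 := by
  rw [parentMap, dif_pos (parentMap_exists hT hx)]
  exact (parentMap_exists hT hx).choose_spec

lemma parentMap_root : parentMap T r2 r2 = r2 := by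
  rw [parentMap, dif_neg]
  rintro ⟨y, -, hy⟩
  simp [SimpleGraph.dist_self] at hy

lemma parentMap_isTreeFun (hT : T.Connected) : IsTreeFun (parentMap T r2) r2 := by
  refine ⟨parentMap_root, fun x => ?_⟩
  generalize hd : T.dist x r2 = D
  induction D using Nat.strong_induction_on generalizing x with
  | _ D ih =>
    by_cases hx : x = r2
    · exact ⟨0, hx⟩
    · obtain ⟨hadj, hlt⟩ := parentMap_spec hT hx
      obtain ⟨m, hm⟩ := ih (T.dist (parentMap T r2 x) r2) (hd ▸ hlt) _ rfl
      exact ⟨m + 1, by rwa [Function.iterate_add_apply, Function.iterate_one]⟩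

end Psi

noncomputable def psiK (t : DoublyRootedTree n) : ℕ :=
  sInf {m | (parentMap t.tree t.r2)^[m] t.r1 = t.r2} + 1

noncomputable def psiM (t : DoublyRootedTree n) : Finset (Fin n) :=
  Finset.image (fun i : Fin (psiK t) => (parentMap t.tree t.r2)^[i.val] t.r1) Finset.univ

noncomputable def psi (t : DoublyRootedTree n) : Fin n → Fin n := fun x =>
  if x ∈ psiM t then (parentMap t.tree t.r2)^[enumIdx (psiM t) x] t.r1
  else parentMap t.tree t.r2 x

/-! ### Round trip 1 : `psi (phi f) = f` -/

section RT1

variable {f : Fin n → Fin n} (hn : 1 ≤ n)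

lemma parentMap_graphOf {p : Fin n → Fin n} {r : Fin n} (h : IsTreeFun p r) (hn : 1 ≤ n) :
    parentMap (graphOf p) r = p := by
  funext x
  by_cases hx : x = r
  · rw [hx, parentMap_root, h.1]
  · have hconn := connected_graphOf h hn
    have hex := parentMap_exists hconn hx
    have hspec := parentMap_spec hconn hx
    exact (parent_unique_closer h hspec.1 hspec.2 hn).symm

lemma phi_tree (f : Fin n → Fin n) : (phi hn f).tree = graphOf (pmap f (coreF_nonempty f hn)) := rfl
lemma phi_r1 (f : Fin n → Fin n) : (phi hn f).r1 = bseq f (coreF_nonempty f hn) 0 := rfl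
lemma phi_r2 (f : Fin n → Fin n) :
    (phi hn f).r2 = bseq f (coreF_nonempty f hn) ((coreF f).card - 1) := rfl

lemma parentMap_phi (f : Fin n → Fin n) :
    parentMap (phi hn f).tree (phi hn f).r2 = pmap f (coreF_nonempty f hn) := by
  rw [phi_tree, phi_r2]
  exact parentMap_graphOf (pmap_isTreeFun (hk := coreF_nonempty f hn)) hn

lemma psiK_phi (f : Fin n → Fin n) : psiK (phi hn f) = (coreF f).card := by
  set hk := coreF_nonempty f hn
  rw [psiK, parentMap_phi hn, phi_r1, phi_r2]
  have hset : ∀ m, (pmap f hk)^[m] (bseq f hk 0) = bseq f hk ((coreF f).card - 1)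
      ↔ (coreF f).card - 1 ≤ m := by
    intro m
    rw [pmap_iterate_b0]
    constructor
    · intro hb
      have := bseq_inj (hk := hk) (by omega) le_rfl hb
      omega
    · intro hm
      rw [Nat.min_eq_right hm]
  set S : Set ℕ := {m | (pmap f hk)^[m] (bseq f hk 0) = bseq f hk ((coreF f).card - 1)} with hS
  have h1 : sInf S ≤ (coreF f).card - 1 := Nat.sInf_le ((hset _).2 le_rfl)
  have h2 : (coreF f).card - 1 ≤ sInf S :=
    (hset _).1 (Nat.sInf_mem (⟨_, (hset _).2 le_rfl⟩ : S.Nonempty))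
  have := hk
  omega

lemma psiM_phi (f : Fin n → Fin n) : psiM (phi hn f) = coreF f := by
  set hk := coreF_nonempty f hn
  ext y
  rw [psiM]
  simp only [Finset.mem_image, Finset.mem_univ, true_and]
  rw [parentMap_phi hn] at *
  constructor
  · rintro ⟨i, rfl⟩
    rw [phi_r1]
    rw [pmap_iterate_b0]
    exact bseq_mem _
  · intro hy
    obtain ⟨j, hj, rfl⟩ := bseq_surj (hk := hk) hy
    have hjK : j < psiK (phi hn f) := by rw [psiK_phi hn]; omega
    refine ⟨⟨j, hjK⟩, ?_⟩
    rw [phi_r1, pmap_iterate_b0, Nat.min_eq_left hj]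

lemma psi_phi (f : Fin n → Fin n) : psi (phi hn f) = f := by
  set hk := coreF_nonempty f hn
  funext x
  rw [psi, parentMap_phi hn, psiM_phi hn, phi_r1]
  by_cases hx : x ∈ coreF f
  · rw [if_pos hx, pmap_iterate_b0]
    have hlt := enumIdx_lt_card hx
    rw [Nat.min_eq_left (by omega)]
    have hx' := orderEmbOfFin_enumIdx hx
    conv_rhs => rw [← hx']
    rw [bseq, aseq_min _ (by omega)]
  · rw [if_neg hx, pmap_not_mem hx]

end RT1

/-! ### Round trip 2 : `phi hn (psi t) = t` -/

lemma drt_ext {a b : DoublyRootedTree n} (h1 : a.tree = b.tree) (h2 : a.r1 = b.r1)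
    (h3 : a.r2 = b.r2) : a = b := by
  cases a; cases b
  cases h1; cases h2; cases h3
  rfl

lemma orderEmbOfFin_congr {s s' : Finset (Fin n)} (h : s = s') {i : ℕ} (hi : i < s.card)
    (hi' : i < s'.card) : s.orderEmbOfFin rfl ⟨i, hi⟩ = s'.orderEmbOfFin rfl ⟨i, hi'⟩ := by
  subst h; rfl

section RT2

variable {t : DoublyRootedTree n}

noncomputable def psiD (t : DoublyRootedTree n) : ℕ :=
  depth (parentMap t.tree t.r2) t.r2 t.r1

lemma psi_treeFun (t : DoublyRootedTree n) : IsTreeFun (parentMap t.tree t.r2) t.r2 :=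
  parentMap_isTreeFun t.isTree.1

lemma psiK_eq (t : DoublyRootedTree n) : psiK t = psiD t + 1 := rfl

lemma depth_c {i : ℕ} (hi : i ≤ psiD t) :
    depth (parentMap t.tree t.r2) t.r2 ((parentMap t.tree t.r2)^[i] t.r1) = psiD t - i := by
  set p := parentMap t.tree t.r2 with hp
  have htf : IsTreeFun p t.r2 := psi_treeFun t
  induction i with
  | zero =>
    simp only [Function.iterate_zero_apply, Nat.sub_zero, psiD, ← hp]
  | succ i ih =>
    have hd := ih (by omega)
    have hne : p^[i] t.r1 ≠ t.r2 := by
      intro he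
      rw [he, depth_root] at hd
      omega
    have hstep := depth_succ htf hne
    rw [Function.iterate_succ_apply']
    omega

lemma c_last (t : DoublyRootedTree n) : (parentMap t.tree t.r2)^[psiD t] t.r1 = t.r2 :=
  iterate_depth (psi_treeFun t) t.r1

lemma c_inj {i j : ℕ} (hi : i ≤ psiD t) (hj : j ≤ psiD t)
    (hij : (parentMap t.tree t.r2)^[i] t.r1 = (parentMap t.tree t.r2)^[j] t.r1) : i = j := by
  have h1 := depth_c (t := t) hi
  have h2 := depth_c (t := t) hj
  rw [hij] at h1
  omega

lemma mem_psiM {y : Fin n} : y ∈ psiM t ↔ ∃ i ≤ psiD t, (parentMap t.tree t.r2)^[i] t.r1 = y := by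
  rw [psiM]
  simp only [Finset.mem_image, Finset.mem_univ, true_and]
  constructor
  · rintro ⟨i, rfl⟩
    exact ⟨i.val, by have h2 := i.2; have hK := psiK_eq t; omega, rfl⟩
  · rintro ⟨i, hi, rfl⟩
    exact ⟨⟨i, by have hK := psiK_eq t; omega⟩, rfl⟩

lemma card_psiM (t : DoublyRootedTree n) : (psiM t).card = psiD t + 1 := by
  rw [psiM, Finset.card_image_of_injOn, Finset.card_univ, Fintype.card_fin, psiK_eq]
  intro i _ j _ hij
  have hi := i.2; have hj := j.2
  have hK := psiK_eq t
  exact Fin.ext (c_inj (by omega) (by omega) hij)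

lemma r2_mem_psiM (t : DoublyRootedTree n) : t.r2 ∈ psiM t :=
  mem_psiM.2 ⟨psiD t, le_rfl, c_last t⟩

lemma psi_not_mem' {x : Fin n} (hx : x ∉ psiM t) : psi t x = parentMap t.tree t.r2 x :=
  if_neg hx

lemma psi_mem' {x : Fin n} (hx : x ∈ psiM t) :
    psi t x = (parentMap t.tree t.r2)^[enumIdx (psiM t) x] t.r1 :=
  if_pos hx

lemma psi_emb (i : Fin (psiM t).card) :
    psi t ((psiM t).orderEmbOfFin rfl i) = (parentMap t.tree t.r2)^[i.val] t.r1 := by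
  rw [psi_mem' (Finset.orderEmbOfFin_mem _ rfl i)]
  rw [show ((psiM t).orderEmbOfFin rfl i) = (psiM t).orderEmbOfFin rfl ⟨i.val, i.2⟩ by rfl]
  rw [enumIdx_orderEmbOfFin (psiM t) ⟨i.val, i.2⟩]

lemma psi_mapsTo {x : Fin n} (hx : x ∈ psiM t) : psi t x ∈ psiM t := by
  rw [psi_mem' hx]
  have hlt := enumIdx_lt_card hx
  rw [card_psiM] at hlt
  exact mem_psiM.2 ⟨enumIdx (psiM t) x, by omega, rfl⟩

lemma psi_injOn {x y : Fin n} (hx : x ∈ psiM t) (hy : y ∈ psiM t)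
    (hxy : psi t x = psi t y) : x = y := by
  have hex := orderEmbOfFin_enumIdx hx
  have hey := orderEmbOfFin_enumIdx hy
  have h1 : psi t x = (parentMap t.tree t.r2)^[enumIdx (psiM t) x] t.r1 := psi_mem' hx
  have h2 : psi t y = (parentMap t.tree t.r2)^[enumIdx (psiM t) y] t.r1 := psi_mem' hy
  have hltx := enumIdx_lt_card hx
  have hlty := enumIdx_lt_card hy
  rw [card_psiM] at hltx hlty
  have : enumIdx (psiM t) x = enumIdx (psiM t) y := by
    apply c_inj (t := t) (by omega) (by omega)
    rw [← h1, ← h2, hxy]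
  rw [← hex, ← hey]
  congr 1
  exact Fin.ext this

lemma coreF_psi (t : DoublyRootedTree n) : coreF (psi t) = psiM t := by
  ext x
  rw [mem_coreF]
  constructor
  · intro hx
    by_contra hxm
    obtain ⟨j, hj, hper⟩ := mem_periodicPts.1 hx
    have hper' : (psi t)^[j] x = x := hper
    have hnever : ∀ i, (psi t)^[i] x ∉ psiM t := by
      intro i hi
      apply hxm
      have hmaps : ∀ d, (psi t)^[d] ((psi t)^[i] x) ∈ psiM t := by
        intro d
        induction d with
        | zero => simpa
        | succ d ih => rw [Function.iterate_succ_apply']; exact psi_mapsTo ih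
      have hx' : x = (psi t)^[j * (i + 1)] x := (iterate_periodic_multiple hper' (i+1)).symm
      have hge : i ≤ j * (i + 1) := by nlinarith
      have : x = (psi t)^[j * (i+1) - i] ((psi t)^[i] x) := by
        rw [← Function.iterate_add_apply, show j*(i+1) - i + i = j*(i+1) by omega]
        exact hx'
      rw [this]
      exact hmaps _
    have hiter : ∀ i, (psi t)^[i] x = (parentMap t.tree t.r2)^[i] x := by
      intro i
      induction i with
      | zero => rfl
      | succ i ih =>
        rw [Function.iterate_succ_apply', Function.iterate_succ_apply', ih,
          ← ih, psi_not_mem' (hnever i), ih]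
    have hper2 : (parentMap t.tree t.r2)^[j] x = x := by rw [← hiter]; exact hper'
    have := eq_root_of_periodic (psi_treeFun t) hj hper2
    rw [this] at hxm
    exact hxm (r2_mem_psiM t)
  · intro hx
    have := periodic_of_injOn_mapsTo (f := psi t) (S := ↑(psiM t))
      (fun a ha b hb hab => psi_injOn (by simpa using ha) (by simpa using hb) hab)
      (fun a ha => by simpa using psi_mapsTo (by simpa using ha)) (by simpa using hx)
    exact this

lemma card_coreF_psi (t : DoublyRootedTree n) : (coreF (psi t)).card = psiD t + 1 := by
  rw [coreF_psi, card_psiM]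

section withHk

variable (hk : 0 < (coreF (psi t)).card)

lemma aseq_psi {j : ℕ} (hj : j ≤ psiD t) :
    aseq (psi t) hk j = (psiM t).orderEmbOfFin rfl ⟨j, by rw [card_psiM]; omega⟩ := by
  rw [aseq_min j (by rw [card_coreF_psi]; omega)]
  exact orderEmbOfFin_congr (coreF_psi t) _ _

lemma bseq_psi {j : ℕ} (hj : j ≤ psiD t) :
    bseq (psi t) hk j = (parentMap t.tree t.r2)^[j] t.r1 := by
  rw [bseq, aseq_psi hk hj]
  exact psi_emb ⟨j, by rw [card_psiM]; omega⟩

lemma pmap_psi : pmap (psi t) hk = parentMap t.tree t.r2 := by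
  funext x
  by_cases hx : x ∈ coreF (psi t)
  · have hj : bidx (psi t) hk x ≤ (coreF (psi t)).card - 1 := bidx_le hx
    have hbx : bseq (psi t) hk (bidx (psi t) hk x) = x := bseq_bidx hx
    have hD : (coreF (psi t)).card - 1 = psiD t := by rw [card_coreF_psi]; omega
    by_cases hlast : bidx (psi t) hk x = (coreF (psi t)).card - 1
    · rw [pmap, if_pos hx, if_pos hlast]
      have hxr2 : x = t.r2 := by
        rw [← hbx, hlast, hD, bseq_psi hk le_rfl, c_last]
      rw [hxr2, parentMap_root]
    · rw [pmap, if_pos hx, if_neg hlast]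
      have hjlt : bidx (psi t) hk x < psiD t := by omega
      rw [bseq_psi hk (by omega)]
      conv_rhs => rw [← hbx, bseq_psi hk (by omega)]
      exact Function.iterate_succ_apply' _ _ _
  · rw [pmap_not_mem hx]
    rw [coreF_psi] at hx
    exact psi_not_mem' hx

lemma graphOf_pmap_psi (hn : 1 ≤ n) : graphOf (pmap (psi t) hk) = t.tree := by
  rw [pmap_psi hk]
  set p := parentMap t.tree t.r2 with hp
  have htf : IsTreeFun p t.r2 := psi_treeFun t
  have hle : graphOf p ≤ t.tree := by
    intro x y hadj
    rw [graphOf_adj] at hadj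
    obtain ⟨hne, hc | hc⟩ := hadj
    · have hx : x ≠ t.r2 := by
        rintro rfl
        exact hne (htf.1.symm.trans hc)
      rw [← hc]
      exact (parentMap_spec t.isTree.1 hx).1
    · have hy : y ≠ t.r2 := by
        rintro rfl
        exact hne (htf.1.symm.trans hc).symm
      rw [← hc]
      exact (parentMap_spec t.isTree.1 hy).1.symm
  have hcardT : t.tree.edgeFinset.card + 1 = n := by
    have := t.isTree.card_edgeFinset
    simpa using this
  have hcardG : (graphOf p).edgeFinset.card = n - 1 := by
    have h1 := card_edgeFinset_graphOf htf
    have h2 : (graphOf p).edgeSet.toFinite.toFinset = (graphOf p).edgeFinset :=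
      Set.Finite.toFinset_eq_toFinset _
    rw [h2] at h1
    simpa using h1
  have hsub : (graphOf p).edgeFinset ⊆ t.tree.edgeFinset :=
    SimpleGraph.edgeFinset_subset_edgeFinset.2 hle
  have heq : (graphOf p).edgeFinset = t.tree.edgeFinset :=
    Finset.eq_of_subset_of_card_le hsub (by omega)
  exact SimpleGraph.edgeFinset_inj.1 heq

end withHk

lemma phi_psi (hn : 1 ≤ n) (t : DoublyRootedTree n) : phi hn (psi t) = t := by
  apply drt_ext
  · exact graphOf_pmap_psi _ hn
  · rw [phi_r1]
    rw [bseq_psi _ (Nat.zero_le _)]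
    rfl
  · rw [phi_r2]
    have hD : (coreF (psi t)).card - 1 = psiD t := by rw [card_coreF_psi]; omega
    rw [hD, bseq_psi _ le_rfl, c_last]

end RT2

/-! ### The edge bound -/

lemma ncard_inCore (f : Fin n → Fin n) : Set.ncard {x | inCore f x} = (coreF f).card := by
  have hset : {x | inCore f x} = periodicPts f := by
    ext x
    constructor
    · rintro ⟨j, hj, hper⟩
      exact mem_periodicPts.2 ⟨j, hj, hper⟩
    · rintro ⟨j, hj, hper⟩
      exact ⟨j, hj, hper⟩
  rw [hset, Set.ncard_eq_toFinset_card _ (periodicPts f).toFinite]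
  rfl

lemma msd_add_le {α : Type*} (a b x : Multiset α) :
    msdCard (a + x) (b + x) ≤ Multiset.card a + Multiset.card b := by
  unfold msdCard
  rw [Multiset.card_add]
  have h1 : a + x - (b + x) ≤ a := by
    rw [Multiset.le_iff_count]
    intro c
    simp only [Multiset.count_sub, Multiset.count_add]
    omega
  have h2 : b + x - (a + x) ≤ b := by
    rw [Multiset.le_iff_count]
    intro c
    simp only [Multiset.count_sub, Multiset.count_add]
    omega
  exact Nat.add_le_add (Multiset.card_le_card h1) (Multiset.card_le_card h2)

lemma edge_bound (hn : 1 ≤ n) (f : Fin n → Fin n) :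
    msdCard (funEdges f) (graphEdges (phi hn f).tree) ≤ 2 * Set.ncard {x | inCore f x} - 1 := by
  classical
  set hk := coreF_nonempty f hn
  set C := coreF f with hC
  set root := bseq f hk ((coreF f).card - 1) with hroot
  have hrootC : root ∈ C := bseq_mem _
  -- the tree edges
  have hB : graphEdges (phi hn f).tree
      = (Finset.univ.erase root).val.map (fun x => s(x, pmap f hk x)) := by
    rw [graphEdges, phi_tree]
    exact graphEdges_graphOf (pmap_isTreeFun (hk := hk))
  -- split univ into C and Cᶜ
  have hunivsplit : (Finset.univ : Finset (Fin n)).val = C.val + Cᶜ.val := by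
    have h1 : C.disjUnion Cᶜ disjoint_compl_right = Finset.univ := by
      rw [Finset.disjUnion_eq_union, Finset.union_compl]
    rw [← h1]
    rfl
  have herasesplit : (Finset.univ.erase root).val = (C.erase root).val + Cᶜ.val := by
    have h1 : (C.erase root).disjUnion Cᶜ
        (Finset.disjoint_left.2 fun a ha hb => (Finset.mem_compl.1 hb) (Finset.mem_of_mem_erase ha))
        = Finset.univ.erase root := by
      rw [Finset.disjUnion_eq_union]
      rw [← Finset.union_compl C, Finset.erase_union_distrib,
        Finset.erase_eq_of_notMem (s := Cᶜ) (by simpa using hrootC)]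
    rw [← h1]
    rfl
  have hA : funEdges f = C.val.map (fun x => s(x, f x)) + Cᶜ.val.map (fun x => s(x, f x)) := by
    rw [funEdges, hunivsplit, Multiset.map_add]
  have hB2 : graphEdges (phi hn f).tree
      = (C.erase root).val.map (fun x => s(x, pmap f hk x)) + Cᶜ.val.map (fun x => s(x, f x)) := by
    rw [hB, herasesplit, Multiset.map_add]
    congr 1
    apply Multiset.map_congr rfl
    intro x hx
    rw [pmap_not_mem (Finset.mem_compl.1 (show x ∈ Cᶜ from hx))]
  set M1 := C.val.map (fun x => s(x, f x)) with hM1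
  set M2 := (C.erase root).val.map (fun x => s(x, pmap f hk x)) with hM2
  set X := Cᶜ.val.map (fun x => s(x, f x)) with hX
  have hcard1 : Multiset.card M1 = C.card := by rw [hM1, Multiset.card_map]; rfl
  have hcard2 : Multiset.card M2 = C.card - 1 := by
    rw [hM2, Multiset.card_map]
    have : (C.erase root).card = C.card - 1 := Finset.card_erase_of_mem hrootC
    rw [← this]; rfl
  have hmain : msdCard (funEdges f) (graphEdges (phi hn f).tree)
      ≤ Multiset.card M1 + Multiset.card M2 := by
    rw [hA, hB2]
    exact msd_add_le M1 M2 X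
  rw [ncard_inCore, ← hC]
  have hk' : 1 ≤ C.card := hk
  omega

end JoyalAux

theorem joyal_bijection (n : ℕ) (hn : 1 ≤ n) :
    ∃ J : (Fin n → Fin n) ≃ DoublyRootedTree n,
      ∀ f : Fin n → Fin n,
        msdCard (funEdges f) (graphEdges (J f).tree) ≤
          2 * Set.ncard {x | inCore f x} - 1 := by
  refine ⟨⟨JoyalAux.phi hn, JoyalAux.psi, fun f => JoyalAux.psi_phi hn f,
    fun t => JoyalAux.phi_psi hn t⟩, ?_⟩
  intro f
  exact JoyalAux.edge_bound hn f
end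

section
/- Let C_n denote the number of cycles of a uniformly random function f : {1,…,n} → {1,…,n} (the number of cycles of the permutation obtained by restricting f to its core). Then for every t > 0 and every ε > 0 there exists N such that for all n ≥ N, P(C_n > (1+t)·log n) ≤ (1+ε)·exp(−(t²/(2+t))·(log n)/4), where log denotes the natural logarithm. -/
set_option linter.unreachableTactic false
set_option linter.unusedTactic false
set_option linter.unusedVariables false

open scoped Classical

/-- The number of cycles of a self-map: the number of distinct forward orbits
of points of the core (each cycle is the forward orbit of any of its points). -/
noncomputable def cycleCount {V : Type*} (f : V → V) : ℕ :=
  Set.ncard ((fun x => {y | ∃ j : ℕ, f^[j] x = y}) '' {x | inCore f x})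

/-- Probability of an event under the uniform distribution over all
functions `Fin n → Fin n`. -/
noncomputable def mapPr (n : ℕ) (P : (Fin n → Fin n) → Prop) : ℝ :=
  ((Finset.univ.filter P).card : ℝ) / ((Finset.univ : Finset (Fin n → Fin n)).card : ℝ)

namespace RandMap

open Function Finset

variable {α : Type*}

/-- forward orbit -/
def orb (f : α → α) (x : α) : Set α := {y | ∃ j : ℕ, f^[j] x = y}

lemma cycleCount_eq (f : α → α) : cycleCount f = Set.ncard (orb f '' {x | inCore f x}) := rfl

lemma mem_orb_self (f : α → α) (x : α) : x ∈ orb f x := ⟨0, rfl⟩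

lemma iterate_mem_orb (f : α → α) (x : α) (j : ℕ) : f^[j] x ∈ orb f x := ⟨j, rfl⟩

lemma orb_trans {f : α → α} {x y : α} (h : y ∈ orb f x) : orb f y ⊆ orb f x := by
  rintro z ⟨j, rfl⟩
  obtain ⟨i, rfl⟩ := h
  exact ⟨j + i, Function.iterate_add_apply f j i x⟩

lemma iterate_mul_fixed {f : α → α} {x : α} {p : ℕ} (hp : f^[p] x = x) (q : ℕ) :
    f^[p * q] x = x := by
  rw [Function.iterate_mul]
  exact Function.iterate_fixed hp q

lemma iterate_mod {f : α → α} {x : α} {p : ℕ} (hp : f^[p] x = x) (j : ℕ) :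
    f^[j] x = f^[j % p] x := by
  conv_lhs => rw [← Nat.mod_add_div j p, Function.iterate_add_apply, iterate_mul_fixed hp]

lemma inCore_iterate {f : α → α} {x : α} (hx : inCore f x) (i : ℕ) : inCore f (f^[i] x) := by
  obtain ⟨p, hp1, hp⟩ := hx
  refine ⟨p, hp1, ?_⟩
  rw [← Function.iterate_add_apply, Nat.add_comm, Function.iterate_add_apply, hp]

lemma mem_orb_of_cyclic {f : α → α} {x y : α} (hx : inCore f x) (hy : y ∈ orb f x) :
    x ∈ orb f y := by
  obtain ⟨p, hp1, hp⟩ := hx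
  obtain ⟨i, rfl⟩ := hy
  refine ⟨p * i - i, ?_⟩
  rw [← Function.iterate_add_apply]
  have hle : i ≤ p * i := Nat.le_mul_of_pos_left i hp1
  rw [Nat.sub_add_cancel hle]
  exact iterate_mul_fixed hp i

lemma orb_eq_of_mem {f : α → α} {x y : α} (hx : inCore f x) (hy : y ∈ orb f x) :
    orb f y = orb f x :=
  le_antisymm (orb_trans hy) (orb_trans (mem_orb_of_cyclic hx hy))

lemma inCore_of_mem_orb {f : α → α} {x y : α} (hx : inCore f x) (hy : y ∈ orb f x) :
    inCore f y := by obtain ⟨i, rfl⟩ := hy; exact inCore_iterate hx i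

lemma orb_eq_of_inter {f : α → α} {x y : α} (hx : inCore f x) (hy : inCore f y)
    (h : (orb f x ∩ orb f y).Nonempty) : orb f x = orb f y := by
  obtain ⟨z, hz1, hz2⟩ := h
  rw [← orb_eq_of_mem hx hz1, orb_eq_of_mem hy hz2]

/-- minimal period of a cyclic point -/
noncomputable def per (f : α → α) (x : α) (h : inCore f x) : ℕ := Nat.find h

lemma per_pos {f : α → α} {x : α} (h : inCore f x) : 1 ≤ per f x h := (Nat.find_spec h).1

lemma iterate_per {f : α → α} {x : α} (h : inCore f x) : f^[per f x h] x = x :=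
  (Nat.find_spec h).2

lemma per_min {f : α → α} {x : α} (h : inCore f x) {j : ℕ} (h1 : 1 ≤ j) (h2 : f^[j] x = x) :
    per f x h ≤ j := Nat.find_le ⟨h1, h2⟩

lemma iterate_inj_of_lt_per {f : α → α} {x : α} (h : inCore f x) {i i' : ℕ}
    (hi : i < per f x h) (hi' : i' < per f x h) (he : f^[i] x = f^[i'] x) : i = i' := by
  rcases lt_trichotomy i i' with hlt | heq | hlt
  · exfalso
    have key : f^[per f x h - i' + i] x = x := by
      rw [Function.iterate_add_apply, he, ← Function.iterate_add_apply,
        Nat.sub_add_cancel hi'.le, iterate_per]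
    have h1 : 1 ≤ per f x h - i' + i := by omega
    have := per_min h h1 key
    omega
  · exact heq
  · exfalso
    have key : f^[per f x h - i + i'] x = x := by
      rw [Function.iterate_add_apply, ← he, ← Function.iterate_add_apply,
        Nat.sub_add_cancel hi.le, iterate_per]
    have h1 : 1 ≤ per f x h - i + i' := by omega
    have := per_min h h1 key
    omega

lemma orb_eq_image_per {f : α → α} {x : α} (h : inCore f x) :
    orb f x = (fun i : ℕ => f^[i] x) '' Set.Iio (per f x h) := by
  ext y
  constructor
  · rintro ⟨j, rfl⟩
    exact ⟨j % per f x h, Nat.mod_lt _ (per_pos h), (iterate_mod (iterate_per h) j).symm⟩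
  · rintro ⟨i, _, rfl⟩
    exact ⟨i, rfl⟩

end RandMap
section FinPart

open RandMap Function Finset

variable {n : ℕ}

/-- representation of a potential cycle: a length and an entry function -/
abbrev CR (n : ℕ) := Σ j : Fin (n + 1), (Fin (j : ℕ) → Fin n)

def GoodShape (w : CR n) : Prop :=
  ∃ h : 0 < (w.1 : ℕ), Function.Injective w.2 ∧ ∀ i, w.2 ⟨0, h⟩ ≤ w.2 i

def Follows (f : Fin n → Fin n) (w : CR n) : Prop :=
  ∀ (i j : Fin (w.1 : ℕ)), ((i : ℕ) + 1) % (w.1 : ℕ) = (j : ℕ) → f (w.2 i) = w.2 j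

def Rng (w : CR n) : Finset (Fin n) := Finset.image w.2 Finset.univ

def hdLT (w w' : CR n) : Prop :=
  ∃ (h : 0 < (w.1 : ℕ)) (h' : 0 < (w'.1 : ℕ)), w.2 ⟨0, h⟩ < w'.2 ⟨0, h'⟩

def GoodArr {k : ℕ} (c : Fin k → CR n) : Prop :=
  (∀ i, GoodShape (c i)) ∧ (∀ i i', i ≠ i' → Disjoint (Rng (c i)) (Rng (c i'))) ∧
    (∀ i i', i < i' → hdLT (c i) (c i'))

def GoodTup {k : ℕ} (f : Fin n → Fin n) (c : Fin k → CR n) : Prop :=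
  GoodArr c ∧ ∀ i, Follows f (c i)

lemma per_le {f : Fin n → Fin n} {a : Fin n} (h : inCore f a) : per f a h ≤ n := by
  have hinj : Function.Injective (fun i : Fin (per f a h) => f^[(i : ℕ)] a) := by
    intro i i' he
    exact Fin.ext (iterate_inj_of_lt_per h i.2 i'.2 he)
  simpa using Fintype.card_le_of_injective _ hinj

/-- the canonical cycle representation through a core point -/
noncomputable def wit (f : Fin n → Fin n) (a : Fin n) (h : inCore f a) : CR n :=
  ⟨⟨per f a h, Nat.lt_succ_of_le (per_le h)⟩, fun i => f^[(i : ℕ)] a⟩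

lemma wit_fst {f : Fin n → Fin n} {a : Fin n} (h : inCore f a) :
    ((wit f a h).1 : ℕ) = per f a h := rfl

lemma wit_head {f : Fin n → Fin n} {a : Fin n} (h : inCore f a) (h0 : 0 < ((wit f a h).1 : ℕ)) :
    (wit f a h).2 ⟨0, h0⟩ = a := rfl

lemma goodShape_wit {f : Fin n → Fin n} {a : Fin n} (h : inCore f a)
    (hmin : ∀ y ∈ orb f a, a ≤ y) : GoodShape (wit f a h) := by
  refine ⟨per_pos h, ?_, ?_⟩
  · intro i i' he
    exact Fin.ext (iterate_inj_of_lt_per h i.2 i'.2 he)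
  · intro i
    exact hmin _ (iterate_mem_orb f a i)

lemma follows_wit {f : Fin n → Fin n} {a : Fin n} (h : inCore f a) : Follows f (wit f a h) := by
  intro i j hij
  show f (f^[(i : ℕ)] a) = f^[(j : ℕ)] a
  rw [← Function.iterate_succ_apply' f i a, ← hij]
  exact (iterate_mod (iterate_per h) _)

lemma coe_Rng_wit {f : Fin n → Fin n} {a : Fin n} (h : inCore f a) :
    (↑(Rng (wit f a h)) : Set (Fin n)) = orb f a := by
  rw [orb_eq_image_per h]
  ext y
  simp only [Rng, coe_image, coe_univ, Set.image_univ, Set.mem_range, Set.mem_image,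
    Set.mem_Iio]
  constructor
  · rintro ⟨i, rfl⟩
    exact ⟨(i : ℕ), i.2, rfl⟩
  · rintro ⟨i, hi, rfl⟩
    exact ⟨⟨i, hi⟩, rfl⟩

/-- total version of `wit` -/
noncomputable def wit' (f : Fin n → Fin n) (a : Fin n) : CR n :=
  if h : inCore f a then wit f a h else ⟨⟨0, Nat.succ_pos n⟩, fun i => absurd i.2 (by simp)⟩

lemma wit'_eq {f : Fin n → Fin n} {a : Fin n} (h : inCore f a) : wit' f a = wit f a h :=
  dif_pos h

/-- minimum of a set in `Fin n` -/
noncomputable def setMin [Nonempty (Fin n)] (S : Set (Fin n)) : Fin n :=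
  if hS : ((Set.toFinite S).toFinset).Nonempty then ((Set.toFinite S).toFinset).min' hS
  else Classical.arbitrary _

lemma setMin_mem [Nonempty (Fin n)] {S : Set (Fin n)} (hS : S.Nonempty) : setMin S ∈ S := by
  have h' : ((Set.toFinite S).toFinset).Nonempty := by
    rwa [Set.Finite.toFinset_nonempty]
  rw [setMin, dif_pos h']
  have := Finset.min'_mem _ h'
  rwa [Set.Finite.mem_toFinset] at this

lemma setMin_le [Nonempty (Fin n)] {S : Set (Fin n)} {y : Fin n} (hy : y ∈ S) :
    setMin S ≤ y := by
  have h' : ((Set.toFinite S).toFinset).Nonempty := ⟨y, by rwa [Set.Finite.mem_toFinset]⟩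
  rw [setMin, dif_pos h']
  exact Finset.min'_le _ _ (by rwa [Set.Finite.mem_toFinset])

lemma setMin_orb_spec [Nonempty (Fin n)] {f : Fin n → Fin n} {S : Set (Fin n)}
    (hS : S ∈ orb f '' {x | inCore f x}) :
    setMin S ∈ S ∧ inCore f (setMin S) ∧ orb f (setMin S) = S := by
  obtain ⟨x₀, hx₀, rfl⟩ := hS
  have hne : (orb f x₀).Nonempty := ⟨x₀, mem_orb_self f x₀⟩
  have hmem := setMin_mem hne
  exact ⟨hmem, inCore_of_mem_orb hx₀ hmem, orb_eq_of_mem hx₀ hmem⟩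

end FinPart
section Extract

open RandMap Function Finset

variable {n : ℕ}

lemma choose_le_goodTup (f : Fin n → Fin n) (k : ℕ) :
    ((cycleCount f).choose k : ℕ) ≤
      (Finset.univ.filter (fun c : Fin k → CR n => GoodTup f c)).card := by
  rcases Nat.eq_zero_or_pos k with rfl | hk
  · simp only [Nat.choose_zero_right]
    refine Finset.card_pos.mpr ⟨fun i => i.elim0, Finset.mem_filter.mpr ⟨Finset.mem_univ _, ?_⟩⟩
    exact ⟨⟨fun i => i.elim0, fun i => i.elim0, fun i => i.elim0⟩, fun i => i.elim0⟩
  by_cases hC : cycleCount f < k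
  · rw [Nat.choose_eq_zero_of_lt hC]; exact Nat.zero_le _
  push_neg at hC
  set O : Set (Set (Fin n)) := orb f '' {x | inCore f x} with hO
  have hOfin : O.Finite := Set.toFinite _
  set OF := hOfin.toFinset with hOF
  have hcard : cycleCount f = OF.card := by
    rw [cycleCount_eq]; exact Set.ncard_eq_toFinset_card _ hOfin
  have hOFne : OF.Nonempty := Finset.card_pos.mp (by omega)
  obtain ⟨S₀, hS₀⟩ := hOFne
  obtain ⟨x₀, -, -⟩ := hOfin.mem_toFinset.mp hS₀
  haveI : Nonempty (Fin n) := ⟨x₀⟩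
  set Θ : Finset (Set (Fin n)) → (Fin k → CR n) := fun T =>
    fun i => wit' f ((Finset.sort (T.image setMin) (· ≤ ·)).getD i x₀) with hΘ
  have main : ∀ T ∈ Finset.powersetCard k OF, GoodTup f (Θ T) ∧
      T = Finset.image (fun i : Fin k => (↑(Rng (Θ T i)) : Set (Fin n))) Finset.univ := by
    intro T hT
    obtain ⟨hTsub, hTcard⟩ := Finset.mem_powersetCard.mp hT
    have hTO : ∀ S ∈ T, S ∈ O := fun S hS => hOfin.mem_toFinset.mp (hTsub hS)
    -- properties of the minima
    have haprop : ∀ b ∈ T.image setMin,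
        inCore f b ∧ orb f b ∈ T ∧ b = setMin (orb f b) ∧ ∀ y ∈ orb f b, b ≤ y := by
      intro b hb
      obtain ⟨S, hST, rfl⟩ := Finset.mem_image.mp hb
      obtain ⟨hmem, hcore, horb⟩ := setMin_orb_spec (hTO S hST)
      refine ⟨hcore, by rw [horb]; exact hST, by rw [horb], ?_⟩
      rw [horb]; intro y hy; exact setMin_le hy
    have hinjMin : Set.InjOn setMin (T : Set (Set (Fin n))) := by
      intro S hS S' hS' he
      have h1 := (setMin_orb_spec (hTO S hS)).2.2
      have h2 := (setMin_orb_spec (hTO S' hS')).2.2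
      rw [← h1, ← h2, he]
    have hMcard : (T.image setMin).card = k := by
      rw [Finset.card_image_of_injOn hinjMin, hTcard]
    set L := Finset.sort (T.image setMin) (· ≤ ·) with hL
    have hlen : L.length = k := by rw [hL, Finset.length_sort, hMcard]
    have hgetlt : ∀ i : Fin k, (i : ℕ) < L.length := fun i => by rw [hlen]; exact i.2
    set a : Fin k → Fin n := fun i => L.getD i x₀ with ha
    have hgd : ∀ i : Fin k, a i = L[(i : ℕ)]'(hgetlt i) :=
      fun i => List.getD_eq_getElem L x₀ (hgetlt i)
    have hamem : ∀ i, a i ∈ T.image setMin := by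
      intro i
      have : L[(i : ℕ)]'(hgetlt i) ∈ L := List.getElem_mem _
      rw [hgd i]
      exact (Finset.mem_sort _).mp this
    have hstrict : StrictMono a := by
      intro i j hij
      rw [hgd i, hgd j]
      have hs : L.Pairwise (· < ·) := (Finset.sortedLT_sort _).pairwise
      exact List.pairwise_iff_getElem.mp hs _ _ _ _ (by simpa using hij)
    -- Θ T i = wit f (a i)
    have hacore : ∀ i, inCore f (a i) := fun i => (haprop _ (hamem i)).1
    have hΘeq : ∀ i, Θ T i = wit f (a i) (hacore i) := by
      intro i; rw [hΘ]; exact wit'_eq (hacore i)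
    have hamin : ∀ i, ∀ y ∈ orb f (a i), a i ≤ y := fun i => (haprop _ (hamem i)).2.2.2
    have hRng : ∀ i, (↑(Rng (Θ T i)) : Set (Fin n)) = orb f (a i) := by
      intro i; rw [hΘeq i]; exact coe_Rng_wit (hacore i)
    have horbinj : ∀ i i', orb f (a i) = orb f (a i') → i = i' := by
      intro i i' he
      have h1 := (haprop _ (hamem i)).2.2.1
      have h2 := (haprop _ (hamem i')).2.2.1
      have : a i = a i' := by rw [h1, h2, he]
      exact hstrict.injective this
    constructor
    · refine ⟨⟨?_, ?_, ?_⟩, ?_⟩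
      · intro i; rw [hΘeq i]; exact goodShape_wit (hacore i) (hamin i)
      · intro i i' hne
        rw [← Finset.disjoint_coe, hRng i, hRng i']
        by_contra hdisj
        obtain ⟨z, hz1, hz2⟩ := Set.not_disjoint_iff.mp hdisj
        exact hne (horbinj i i' (orb_eq_of_inter (hacore i) (hacore i') ⟨z, hz1, hz2⟩))
      · intro i i' hlt
        rw [hΘeq i, hΘeq i']
        exact ⟨per_pos _, per_pos _, by exact hstrict hlt⟩
      · intro i; rw [hΘeq i]; exact follows_wit (hacore i)
    · -- T is recoverable
      have himg : Finset.image (fun i : Fin k => orb f (a i)) Finset.univ = T := by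
        apply Finset.eq_of_subset_of_card_le
        · intro S hS
          obtain ⟨i, -, rfl⟩ := Finset.mem_image.mp hS
          exact (haprop _ (hamem i)).2.1
        · rw [hTcard]
          rw [Finset.card_image_of_injOn (fun i _ i' _ h => horbinj i i' h)]
          simp
      calc T = Finset.image (fun i : Fin k => orb f (a i)) Finset.univ := himg.symm
        _ = _ := by
            apply Finset.image_congr
            intro i _
            exact (hRng i).symm
  rw [hcard, ← Finset.card_powersetCard]
  apply Finset.card_le_card_of_injOn Θ
  · intro T hT
    exact Finset.mem_filter.mpr ⟨Finset.mem_univ _, (main T hT).1⟩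
  · intro T hT T' hT' he
    rw [(main T hT).2, (main T' hT').2, he]

end Extract
section Fiber

open RandMap Function Finset

variable {n k : ℕ}

/-- the successor function encoded by a tuple of cycles -/
noncomputable def nxt (c : Fin k → CR n) : Fin n → Fin n := fun x =>
  if h : ∃ p : Σ i : Fin k, Fin ((c i).1 : ℕ), (c p.1).2 p.2 = x then
    (c h.choose.1).2 ⟨((h.choose.2 : ℕ) + 1) % ((c h.choose.1).1 : ℕ),
      Nat.mod_lt _ h.choose.2.pos⟩
  else x

/-- the union of the ranges of the cycles -/
def Dom (c : Fin k → CR n) : Finset (Fin n) := Finset.univ.biUnion (fun i => Rng (c i))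

lemma follows_iff {c : Fin k → CR n} (hGA : GoodArr c) (f : Fin n → Fin n) :
    (∀ i, Follows f (c i)) ↔ ∀ x ∈ Dom c, f x = nxt c x := by
  constructor
  · intro hf x hx
    have h : ∃ p : Σ i : Fin k, Fin ((c i).1 : ℕ), (c p.1).2 p.2 = x := by
      obtain ⟨i, -, hi⟩ := Finset.mem_biUnion.mp hx
      obtain ⟨idx, -, hidx⟩ := Finset.mem_image.mp hi
      exact ⟨⟨i, idx⟩, hidx⟩
    rw [nxt, dif_pos h]
    conv_lhs => rw [← h.choose_spec]
    exact hf h.choose.1 h.choose.2 _ rfl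
  · intro hf i idx j hij
    have hx : (c i).2 idx ∈ Dom c := Finset.mem_biUnion.mpr
      ⟨i, Finset.mem_univ _, Finset.mem_image.mpr ⟨idx, Finset.mem_univ _, rfl⟩⟩
    have h : ∃ p : Σ i : Fin k, Fin ((c i).1 : ℕ), (c p.1).2 p.2 = (c i).2 idx :=
      ⟨⟨i, idx⟩, rfl⟩
    rw [hf _ hx, nxt, dif_pos h]
    have key : ∀ (p : Σ i' : Fin k, Fin ((c i').1 : ℕ)), (c p.1).2 p.2 = (c i).2 idx →
        (c p.1).2 ⟨((p.2 : ℕ) + 1) % ((c p.1).1 : ℕ), Nat.mod_lt _ p.2.pos⟩ = (c i).2 j := by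
      rintro ⟨qi, qidx⟩ hch
      have hqi : qi = i := by
        by_contra hne
        have hdis := hGA.2.1 qi i hne
        have m1 : (c qi).2 qidx ∈ Rng (c qi) :=
          Finset.mem_image.mpr ⟨qidx, Finset.mem_univ _, rfl⟩
        have m2 : (c qi).2 qidx ∈ Rng (c i) := by
          rw [hch]; exact Finset.mem_image.mpr ⟨idx, Finset.mem_univ _, rfl⟩
        exact Finset.disjoint_left.mp hdis m1 m2
      subst hqi
      obtain ⟨-, hinj, -⟩ := hGA.1 qi
      have hidx : qidx = idx := hinj hch
      subst hidx
      refine congrArg _ (Fin.ext ?_)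
      exact hij
    exact key h.choose h.choose_spec

lemma card_Dom {c : Fin k → CR n} (hGA : GoodArr c) :
    (Dom c).card = ∑ i, ((c i).1 : ℕ) := by
  rw [Dom, Finset.card_biUnion (fun i _ i' _ hne => hGA.2.1 i i' hne)]
  congr 1
  ext i
  obtain ⟨-, hinj, -⟩ := hGA.1 i
  rw [Rng, Finset.card_image_of_injective _ hinj]
  simp

lemma card_fiber {c : Fin k → CR n} (hGA : GoodArr c) :
    (Finset.univ.filter (fun f : Fin n → Fin n => ∀ i, Follows f (c i))).card =
      n ^ (n - (Dom c).card) := by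
  have : (Finset.univ.filter (fun f : Fin n → Fin n => ∀ i, Follows f (c i))) =
      (Finset.univ.filter (fun f : Fin n → Fin n => ∀ x ∈ Dom c, f x = nxt c x)) := by
    apply Finset.filter_congr
    intro f _
    exact follows_iff hGA f
  rw [this]
  have hcard : (Finset.univ.filter
      (fun f : Fin n → Fin n => ∀ x ∈ Dom c, f x = nxt c x)).card =
      (Finset.univ : Finset ({x // x ∈ (Dom c)ᶜ} → Fin n)).card := by
    apply Finset.card_bij' (fun f _ => fun x => f x.1)
      (fun g _ => fun x => if h : x ∈ Dom c then nxt c x else g ⟨x, Finset.mem_compl.mpr h⟩)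
    · intro f hf
      funext x
      by_cases hx : x ∈ Dom c
      · rw [dif_pos hx]
        exact ((Finset.mem_filter.mp hf).2 x hx).symm
      · rw [dif_neg hx]
    · intro g _
      funext x
      have hx : ¬ (x.1 ∈ Dom c) := Finset.mem_compl.mp x.2
      simp only [dif_neg hx]
    · intro f hf
      exact Finset.mem_univ _
    · intro g _
      refine Finset.mem_filter.mpr ⟨Finset.mem_univ _, ?_⟩
      intro x hx
      simp only [dif_pos hx]
  rw [hcard, Finset.card_univ, Fintype.card_fun, Fintype.card_coe, Finset.card_compl,
    Fintype.card_fin]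

end Fiber
section Sums

open RandMap Function Finset

/-- harmonic-type sum -/
noncomputable def Hsum (n : ℕ) : ℝ := ∑ j ∈ Finset.range (n + 1), ((j : ℝ))⁻¹

variable {n k : ℕ}

noncomputable def uwt (w : CR n) : ℝ := ((n : ℝ))⁻¹ ^ ((w.1 : ℕ))

lemma uwt_nonneg (w : CR n) : 0 ≤ uwt w := by
  unfold uwt; positivity

/-- rotation argument: good cycles of length `j` number at most `n^j / j` -/
lemma count_rot (j : Fin (n + 1)) (hj : 0 < (j : ℕ)) :
    (Finset.univ.filter (fun v : Fin (j : ℕ) → Fin n =>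
      GoodShape (⟨j, v⟩ : CR n))).card * (j : ℕ) ≤ n ^ (j : ℕ) := by
  haveI : NeZero (j : ℕ) := ⟨hj.ne'⟩
  have hz : ∀ (v : Fin (j : ℕ) → Fin n) (h : 0 < (j:ℕ)), v ⟨0, h⟩ = v 0 := by
    intro v h
    congr 1
    all_goals first | rfl | exact Fin.mk_zero | simp
  calc (Finset.univ.filter (fun v : Fin (j : ℕ) → Fin n =>
          GoodShape (⟨j, v⟩ : CR n))).card * (j : ℕ)
      = ((Finset.univ.filter (fun v : Fin (j : ℕ) → Fin n => GoodShape (⟨j, v⟩ : CR n))) ×ˢ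
          (Finset.univ : Finset (Fin (j : ℕ)))).card := by
        simp [Finset.card_product]
    _ ≤ (Finset.univ : Finset (Fin (j : ℕ) → Fin n)).card := by
        apply Finset.card_le_card_of_injOn (fun p => fun i => p.1 (i + p.2))
        · intro p _; exact Finset.mem_univ _
        · rintro ⟨v, r⟩ hp ⟨v', r'⟩ hp' he
          simp only [Finset.coe_product, Set.mem_prod, Finset.mem_coe,
            Finset.mem_filter] at hp hp'
          obtain ⟨h1, hinj, hmin⟩ := hp.1.2
          obtain ⟨h1', hinj', hmin'⟩ := hp'.1.2
          simp only at he
          have hmin0 : ∀ i, v 0 ≤ v i := by intro i; rw [← hz v h1]; exact hmin i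
          have hmin0' : ∀ i, v' 0 ≤ v' i := by intro i; rw [← hz v' h1']; exact hmin' i
          have e1 : v 0 = v' (-r + r') := by
            have := congrFun he (-r)
            simpa [neg_add_cancel] using this
          have e2 : v (-r' + r) = v' 0 := by
            have := congrFun he (-r')
            simpa [neg_add_cancel] using this
          have h00 : v 0 = v' 0 :=
            le_antisymm (e2 ▸ hmin0 (-r' + r)) (e1 ▸ hmin0' (-r + r'))
          have hr : -r + r' = 0 := hinj' (show v' (-r + r') = v' 0 by rw [← e1, h00])
          have hrr : r = r' := neg_add_eq_zero.mp hr
          subst hrr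
          have hvv : v = v' := by
            funext i
            have := congrFun he (i - r)
            simpa [sub_add_cancel] using this
          rw [hvv]
    _ = n ^ (j : ℕ) := by rw [Finset.card_univ, Fintype.card_fun, Fintype.card_fin,
          Fintype.card_fin]

lemma sum_uwt_le (hn : 0 < n) :
    ∑ w ∈ Finset.univ.filter (fun w : CR n => GoodShape w), uwt w ≤ Hsum n := by
  rw [Finset.sum_filter, ← Finset.univ_sigma_univ, Finset.sum_sigma]
  have key : ∀ j : Fin (n + 1),
      (∑ v : Fin (j : ℕ) → Fin n, if GoodShape (⟨j, v⟩ : CR n) then uwt (⟨j, v⟩ : CR n) else 0)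
        ≤ (((j : ℕ) : ℝ))⁻¹ := by
    intro j
    have huwt : ∀ v : Fin (j : ℕ) → Fin n, uwt (⟨j, v⟩ : CR n) = ((n:ℝ))⁻¹ ^ ((j:ℕ)) := by
      intro v; rfl
    rcases Nat.eq_zero_or_pos (j : ℕ) with hj | hj
    · have : ∀ v : Fin (j : ℕ) → Fin n, ¬ GoodShape (⟨j, v⟩ : CR n) := by
        rintro v ⟨h, -⟩
        exact absurd (show 0 < (j : ℕ) from h) (by omega)
      simp [this, hj]
    · have hcount := count_rot j hj
      have hsum : (∑ v : Fin (j : ℕ) → Fin n,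
          if GoodShape (⟨j, v⟩ : CR n) then uwt (⟨j, v⟩ : CR n) else 0) =
          ((Finset.univ.filter (fun v : Fin (j : ℕ) → Fin n =>
            GoodShape (⟨j, v⟩ : CR n))).card : ℝ) * ((n:ℝ))⁻¹ ^ ((j:ℕ)) := by
        rw [← Finset.sum_filter]
        rw [Finset.sum_congr rfl (fun v _ => huwt v), Finset.sum_const, nsmul_eq_mul]
      rw [hsum]
      have hjpos : (0:ℝ) < ((j:ℕ) : ℝ) := by exact_mod_cast hj
      have hnpos : (0:ℝ) < (n:ℝ) := by exact_mod_cast hn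
      have hcle : ((Finset.univ.filter (fun v : Fin (j : ℕ) → Fin n =>
          GoodShape (⟨j, v⟩ : CR n))).card : ℝ) ≤ (n:ℝ) ^ (j:ℕ) / ((j:ℕ):ℝ) := by
        rw [le_div_iff₀ hjpos]
        exact_mod_cast hcount
      calc ((Finset.univ.filter (fun v : Fin (j : ℕ) → Fin n =>
            GoodShape (⟨j, v⟩ : CR n))).card : ℝ) * ((n:ℝ))⁻¹ ^ ((j:ℕ))
          ≤ ((n:ℝ) ^ (j:ℕ) / ((j:ℕ):ℝ)) * ((n:ℝ))⁻¹ ^ ((j:ℕ)) := by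
            apply mul_le_mul_of_nonneg_right hcle
            positivity
        _ = (((j : ℕ):ℝ))⁻¹ := by
            rw [div_mul_eq_mul_div, ← mul_pow, mul_inv_cancel₀ hnpos.ne', one_pow, one_div]
  calc ∑ j : Fin (n+1), (∑ v : Fin (j : ℕ) → Fin n,
        if GoodShape (⟨j, v⟩ : CR n) then uwt (⟨j, v⟩ : CR n) else 0)
      ≤ ∑ j : Fin (n+1), (((j : ℕ):ℝ))⁻¹ := Finset.sum_le_sum (fun j _ => key j)
    _ = Hsum n := by rw [Hsum, ← Finset.sum_range (fun j => ((j:ℝ))⁻¹)]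

/-- head value of a cycle representation, as a natural number -/
noncomputable def hdN (w : CR n) : ℕ :=
  if h : 0 < (w.1 : ℕ) then ((w.2 ⟨0, h⟩ : Fin n) : ℕ) else 0

lemma hdN_strictMono {c : Fin k → CR n} (hGA : GoodArr c) :
    StrictMono (fun i => hdN (c i)) := by
  intro i i' hlt
  obtain ⟨h, h', hv⟩ := hGA.2.2 i i' hlt
  simp only [hdN, dif_pos h, dif_pos h']
  exact_mod_cast hv

lemma sum_GA_le (hn : 0 < n) (k : ℕ) :
    (k.factorial : ℝ) * ∑ c ∈ Finset.univ.filter (fun c : Fin k → CR n => GoodArr c),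
        ∏ i, uwt (c i) ≤
      (∑ w ∈ Finset.univ.filter (fun w : CR n => GoodShape w), uwt w) ^ k := by
  classical
  set GS := Finset.univ.filter (fun w : CR n => GoodShape w) with hGS
  set GAf := Finset.univ.filter (fun c : Fin k → CR n => GoodArr c) with hGAf
  set W : (Fin k → CR n) → ℝ := fun d => ∏ i, uwt (d i) with hW
  have hWnn : ∀ d, 0 ≤ W d := fun d => Finset.prod_nonneg (fun i _ => uwt_nonneg _)
  set Ψ : (Fin k → CR n) × Equiv.Perm (Fin k) → (Fin k → CR n) :=
    fun p => fun i => p.1 (p.2 i) with hΨ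
  have hstep1 : (k.factorial : ℝ) * ∑ c ∈ GAf, W c =
      ∑ p ∈ GAf ×ˢ (Finset.univ : Finset (Equiv.Perm (Fin k))), W (Ψ p) := by
    rw [Finset.sum_product]
    have : ∀ c ∈ GAf, ∑ σ : Equiv.Perm (Fin k), W (Ψ (c, σ)) = (k.factorial : ℝ) * W c := by
      intro c _
      have : ∀ σ : Equiv.Perm (Fin k), W (Ψ (c, σ)) = W c := by
        intro σ
        exact Equiv.prod_comp σ (fun i => uwt (c i))
      rw [Finset.sum_congr rfl (fun σ _ => this σ), Finset.sum_const, nsmul_eq_mul,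
        Finset.card_univ, Fintype.card_perm, Fintype.card_fin]
    rw [Finset.sum_congr rfl this, ← Finset.mul_sum]
  have hinj : Set.InjOn Ψ ((GAf ×ˢ (Finset.univ : Finset (Equiv.Perm (Fin k)))) : Set _) := by
    rintro ⟨c, σ⟩ hp ⟨c', σ'⟩ hp' he
    simp only [Finset.coe_product, Set.mem_prod, Finset.mem_coe, hGAf,
      Finset.mem_filter] at hp hp'
    have hGA : GoodArr c := hp.1.2
    have hGA' : GoodArr c' := hp'.1.2
    have hm := hdN_strictMono hGA
    have hm' := hdN_strictMono hGA'
    have hcomp : (fun i => hdN (c i)) ∘ σ = (fun i => hdN (c' i)) ∘ σ' := by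
      funext i
      exact congrArg hdN (congrFun he i)
    have hrange : Set.range (fun i => hdN (c i)) = Set.range (fun i => hdN (c' i)) := by
      rw [← σ.surjective.range_comp, hcomp, σ'.surjective.range_comp]
    have : WellFoundedLT (Fin k) := inferInstance
    have hcc' : (fun i => hdN (c i)) = (fun i => hdN (c' i)) := (hm.range_inj hm').mp hrange
    have hσ : σ = σ' := by
      apply Equiv.ext
      intro i
      apply hm.injective
      have h1 : hdN (c (σ i)) = hdN (c' (σ' i)) := congrFun hcomp i
      have h2 : hdN (c' (σ' i)) = hdN (c (σ' i)) := (congrFun hcc' (σ' i)).symm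
      exact h1.trans h2
    subst hσ
    have hc : c = c' := by
      funext i
      have := congrFun he (σ.symm i)
      simpa [hΨ, Equiv.apply_symm_apply] using this
    rw [hc]
  have hstep2 : ∑ p ∈ GAf ×ˢ (Finset.univ : Finset (Equiv.Perm (Fin k))), W (Ψ p) =
      ∑ d ∈ (GAf ×ˢ (Finset.univ : Finset (Equiv.Perm (Fin k)))).image Ψ, W d :=
    (Finset.sum_image (fun p hp p' hp' => hinj (by exact_mod_cast hp) (by exact_mod_cast hp'))).symm
  have hsub : (GAf ×ˢ (Finset.univ : Finset (Equiv.Perm (Fin k)))).image Ψ ⊆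
      Fintype.piFinset (fun _ : Fin k => GS) := by
    intro d hd
    obtain ⟨⟨c, σ⟩, hp, rfl⟩ := Finset.mem_image.mp hd
    simp only [hGAf, Finset.mem_product, Finset.mem_filter] at hp
    rw [Fintype.mem_piFinset]
    intro i
    rw [hGS, Finset.mem_filter]
    exact ⟨Finset.mem_univ _, hp.1.2.1 (σ i)⟩
  have hstep3 : ∑ d ∈ (GAf ×ˢ (Finset.univ : Finset (Equiv.Perm (Fin k)))).image Ψ, W d ≤
      ∑ d ∈ Fintype.piFinset (fun _ : Fin k => GS), W d :=
    Finset.sum_le_sum_of_subset_of_nonneg hsub (fun d _ _ => hWnn d)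
  have hstep4 : ∑ d ∈ Fintype.piFinset (fun _ : Fin k => GS), W d =
      (∑ w ∈ GS, uwt w) ^ k := by
    rw [← Finset.prod_univ_sum]
    rw [Finset.prod_const, Finset.card_univ, Fintype.card_fin]
  rw [hstep1, hstep2, ← hstep4]
  exact hstep3

end Sums
section MainCount

open RandMap Function Finset

variable {n : ℕ}

lemma cycleCount_le (f : Fin n → Fin n) : cycleCount f ≤ n := by
  rcases Nat.eq_zero_or_pos n with rfl | hn
  · have : {x : Fin 0 | inCore f x} = ∅ := Set.eq_empty_of_isEmpty _
    rw [cycleCount_eq, this]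
    simp
  · haveI : Nonempty (Fin n) := ⟨⟨0, hn⟩⟩
    set O : Set (Set (Fin n)) := orb f '' {x | inCore f x} with hO
    have hinj : Set.InjOn setMin O := by
      intro S hS S' hS' he
      have h1 := (setMin_orb_spec hS).2.2
      have h2 := (setMin_orb_spec hS').2.2
      rw [← h1, ← h2, he]
    calc cycleCount f = O.ncard := cycleCount_eq f
      _ = (setMin '' O).ncard := (Set.ncard_image_of_injOn hinj).symm
      _ ≤ (Set.univ : Set (Fin n)).ncard := Set.ncard_le_ncard (Set.subset_univ _)
          (Set.toFinite _)
      _ = n := by rw [Set.ncard_univ, Nat.card_eq_fintype_card, Fintype.card_fin]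

lemma swap_count (n k : ℕ) :
    ∑ f : Fin n → Fin n,
        (Finset.univ.filter (fun c : Fin k → CR n => GoodTup f c)).card =
      ∑ c ∈ Finset.univ.filter (fun c : Fin k → CR n => GoodArr c),
        (Finset.univ.filter (fun f : Fin n → Fin n => ∀ i, Follows f (c i))).card := by
  simp_rw [Finset.card_filter]
  rw [Finset.sum_comm]
  rw [Finset.sum_filter]
  apply Finset.sum_congr rfl
  intro c _
  by_cases h : GoodArr c
  · simp [GoodTup, h]
  · simp [GoodTup, h]

lemma main_count (hn : 0 < n) (k : ℕ) :
    ∑ f : Fin n → Fin n, ((cycleCount f).choose k : ℝ) ≤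
      (n : ℝ) ^ n * Hsum n ^ k / k.factorial := by
  have hnR : (0:ℝ) < (n:ℝ) := by exact_mod_cast hn
  have h1 : ∑ f : Fin n → Fin n, ((cycleCount f).choose k : ℝ) ≤
      ∑ f : Fin n → Fin n,
        (((Finset.univ.filter (fun c : Fin k → CR n => GoodTup f c)).card : ℕ) : ℝ) := by
    apply Finset.sum_le_sum
    intro f _
    exact_mod_cast choose_le_goodTup f k
  have h2 : ∑ f : Fin n → Fin n,
      (((Finset.univ.filter (fun c : Fin k → CR n => GoodTup f c)).card : ℕ) : ℝ) =
      ∑ c ∈ Finset.univ.filter (fun c : Fin k → CR n => GoodArr c),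
        (n : ℝ) ^ n * ∏ i, uwt (c i) := by
    rw [← Nat.cast_sum, swap_count n k, Nat.cast_sum]
    apply Finset.sum_congr rfl
    intro c hc
    have hGA : GoodArr c := (Finset.mem_filter.mp hc).2
    rw [card_fiber hGA]
    have hle : (Dom c).card ≤ n := by
      calc (Dom c).card ≤ Fintype.card (Fin n) := Finset.card_le_univ _
        _ = n := Fintype.card_fin n
    have hprod : ∏ i, uwt (c i) = ((n:ℝ))⁻¹ ^ ((Dom c).card) := by
      rw [card_Dom hGA]
      rw [← Finset.prod_pow_eq_pow_sum]
      try rfl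
    rw [hprod]
    rw [Nat.cast_pow]
    rw [pow_sub₀ _ hnR.ne' hle]
    rw [inv_pow]
    try rw [div_eq_mul_inv]
  have h3 : ∑ c ∈ Finset.univ.filter (fun c : Fin k → CR n => GoodArr c),
      (n : ℝ) ^ n * ∏ i, uwt (c i) ≤ (n : ℝ) ^ n * (Hsum n ^ k / k.factorial) := by
    rw [← Finset.mul_sum]
    apply mul_le_mul_of_nonneg_left _ (by positivity)
    have hfac : (0:ℝ) < k.factorial := by exact_mod_cast k.factorial_pos
    rw [le_div_iff₀ hfac]
    have hGA := sum_GA_le hn k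
    have hS1 : ∑ w ∈ Finset.univ.filter (fun w : CR n => GoodShape w), uwt w ≤ Hsum n :=
      sum_uwt_le hn
    have hS1nn : 0 ≤ ∑ w ∈ Finset.univ.filter (fun w : CR n => GoodShape w), uwt w :=
      Finset.sum_nonneg (fun w _ => uwt_nonneg w)
    calc (∑ c ∈ Finset.univ.filter (fun c : Fin k → CR n => GoodArr c),
            ∏ i, uwt (c i)) * k.factorial
        = (k.factorial : ℝ) * ∑ c ∈ Finset.univ.filter (fun c : Fin k → CR n => GoodArr c),
            ∏ i, uwt (c i) := mul_comm _ _
      _ ≤ (∑ w ∈ Finset.univ.filter (fun w : CR n => GoodShape w), uwt w) ^ k := hGA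
      _ ≤ Hsum n ^ k := pow_le_pow_left₀ hS1nn hS1 k
  calc ∑ f : Fin n → Fin n, ((cycleCount f).choose k : ℝ)
      ≤ _ := h1
    _ = _ := h2
    _ ≤ (n : ℝ) ^ n * (Hsum n ^ k / k.factorial) := h3
    _ = (n : ℝ) ^ n * Hsum n ^ k / k.factorial := by ring

lemma Hsum_nonneg (n : ℕ) : 0 ≤ Hsum n := by
  apply Finset.sum_nonneg
  intro j _
  positivity

lemma mgf_bound (hn : 0 < n) {s : ℝ} (hs : 0 ≤ s) :
    ∑ f : Fin n → Fin n, (1 + s) ^ (cycleCount f) ≤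
      (n : ℝ) ^ n * Real.exp (s * Hsum n) := by
  have expand : ∀ f : Fin n → Fin n, (1 + s) ^ (cycleCount f) =
      ∑ j ∈ Finset.range (n + 1), ((cycleCount f).choose j : ℝ) * s ^ j := by
    intro f
    set C := cycleCount f with hC
    have h1 : (1 + s) ^ C = ∑ j ∈ Finset.range (C + 1), (C.choose j : ℝ) * s ^ j := by
      rw [add_comm 1 s, add_pow]
      apply Finset.sum_congr rfl
      intro j _
      rw [one_pow]
      ring
    rw [h1]
    apply Finset.sum_subset
    · apply Finset.range_subset_range.mpr
      have := cycleCount_le f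
      omega
    · intro j _ hj
      have hCj : C < j := by
        simp only [Finset.mem_range] at hj
        omega
      rw [Nat.choose_eq_zero_of_lt hCj]
      simp
  calc ∑ f : Fin n → Fin n, (1 + s) ^ (cycleCount f)
      = ∑ f : Fin n → Fin n, ∑ j ∈ Finset.range (n + 1),
          ((cycleCount f).choose j : ℝ) * s ^ j := Finset.sum_congr rfl (fun f _ => expand f)
    _ = ∑ j ∈ Finset.range (n + 1), (∑ f : Fin n → Fin n,
          ((cycleCount f).choose j : ℝ)) * s ^ j := by
        rw [Finset.sum_comm]
        apply Finset.sum_congr rfl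
        intro j _
        rw [Finset.sum_mul]
    _ ≤ ∑ j ∈ Finset.range (n + 1), ((n : ℝ) ^ n * Hsum n ^ j / j.factorial) * s ^ j := by
        apply Finset.sum_le_sum
        intro j _
        apply mul_le_mul_of_nonneg_right (main_count hn j) (by positivity)
    _ = (n : ℝ) ^ n * ∑ j ∈ Finset.range (n + 1), (s * Hsum n) ^ j / j.factorial := by
        rw [Finset.mul_sum]
        apply Finset.sum_congr rfl
        intro j _
        rw [mul_pow]
        ring
    _ ≤ (n : ℝ) ^ n * Real.exp (s * Hsum n) := by
        apply mul_le_mul_of_nonneg_left _ (by positivity)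
        exact Real.sum_le_exp_of_nonneg (mul_nonneg hs (Hsum_nonneg n)) _
  
lemma tail_bound (hn : 0 < n) (k : ℕ) {s : ℝ} (hs : 0 ≤ s) :
    ((Finset.univ.filter (fun f : Fin n → Fin n => k ≤ cycleCount f)).card : ℝ) *
        (1 + s) ^ k ≤ (n : ℝ) ^ n * Real.exp (s * Hsum n) := by
  have h1s : (1:ℝ) ≤ 1 + s := by linarith
  calc ((Finset.univ.filter (fun f : Fin n → Fin n => k ≤ cycleCount f)).card : ℝ) *
        (1 + s) ^ k
      = ∑ _f ∈ Finset.univ.filter (fun f : Fin n → Fin n => k ≤ cycleCount f),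
          (1 + s) ^ k := by rw [Finset.sum_const, nsmul_eq_mul]
    _ ≤ ∑ f ∈ Finset.univ.filter (fun f : Fin n → Fin n => k ≤ cycleCount f),
          (1 + s) ^ (cycleCount f) := by
        apply Finset.sum_le_sum
        intro f hf
        exact pow_le_pow_right₀ h1s (Finset.mem_filter.mp hf).2
    _ ≤ ∑ f : Fin n → Fin n, (1 + s) ^ (cycleCount f) := by
        apply Finset.sum_le_sum_of_subset_of_nonneg (Finset.filter_subset _ _)
        intro f _ _
        positivity
    _ ≤ _ := mgf_bound hn hs

end MainCount
section Analysis

open RandMap Function Finset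

lemma Hsum_eq_harmonic (n : ℕ) : Hsum n = (harmonic n : ℝ) := by
  rw [Hsum, Finset.sum_range_succ']
  simp only [Nat.cast_zero, inv_zero, add_zero]
  rw [harmonic, Rat.cast_sum]
  push_cast
  rfl

lemma Hsum_le_log (n : ℕ) : Hsum n ≤ 1 + Real.log n := by
  rw [Hsum_eq_harmonic]
  exact harmonic_le_one_add_log n

lemma key_log {t : ℝ} (ht : 0 < t) :
    (Real.sqrt (1 + t) - 1) ^ 2 ≤ (1 + t) * Real.log (1 + t) - t := by
  set u := Real.sqrt (1 + t) with hu
  have hu0 : 0 < u := Real.sqrt_pos.mpr (by linarith)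
  have hu2 : u ^ 2 = 1 + t := Real.sq_sqrt (by linarith)
  have hlogu : Real.log (1 + t) = 2 * Real.log u := by
    rw [← hu2, Real.log_pow]
    push_cast
    ring
  have hlu : 1 - u⁻¹ ≤ Real.log u := by
    have h := Real.log_le_sub_one_of_pos (inv_pos.mpr hu0)
    rw [Real.log_inv] at h
    linarith
  have h2 : u ^ 2 * (2 * (1 - u⁻¹)) = 2 * u ^ 2 - 2 * u := by
    field_simp
  have h1 : u ^ 2 * (2 * (1 - u⁻¹)) ≤ (1 + t) * Real.log (1 + t) := by
    rw [hlogu, ← hu2]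
    have hle : 2 * (1 - u⁻¹) ≤ 2 * Real.log u := by linarith
    exact mul_le_mul_of_nonneg_left hle (by positivity)
  nlinarith [h1, h2, hu2]

lemma key_gap {t : ℝ} (ht : 0 < t) :
    t ^ 2 / (2 + t) / 4 < (Real.sqrt (1 + t) - 1) ^ 2 := by
  set u := Real.sqrt (1 + t) with hu
  have hu0 : 0 < u := Real.sqrt_pos.mpr (by linarith)
  have hu2 : u ^ 2 = 1 + t := Real.sq_sqrt (by linarith)
  have hub : u ≤ 1 + t / 2 := by
    have hle : (1 + t) ≤ (1 + t / 2) ^ 2 := by nlinarith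
    calc u ≤ Real.sqrt ((1 + t / 2) ^ 2) := Real.sqrt_le_sqrt hle
      _ = 1 + t / 2 := Real.sqrt_sq (by linarith)
  have hup : 0 < u + 1 := by linarith
  have hfact : (u - 1) * (u + 1) = t := by nlinarith [hu2]
  have h1 : u - 1 = t / (u + 1) := by
    rw [eq_div_iff hup.ne']
    exact hfact
  rw [h1, div_pow, div_div]
  apply div_lt_div_of_pos_left (by positivity) (by positivity)
  nlinarith [hub, hu2, ht]

end Analysis

set_option maxHeartbeats 1000000 in
theorem cycle_distribution_random_mapping (t ε : ℝ) (ht : 0 < t) (hε : 0 < ε) :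
    ∃ N : ℕ, ∀ n ≥ N,
      mapPr n (fun f => (cycleCount f : ℝ) > (1 + t) * Real.log n) ≤
        (1 + ε) * Real.exp (-(t ^ 2 / (2 + t)) * Real.log n / 4) := by
  classical
  obtain ⟨u, hu⟩ : ∃ u, u = Real.sqrt (1 + t) := ⟨_, rfl⟩
  obtain ⟨a, ha⟩ : ∃ a, a = (u - 1) ^ 2 := ⟨_, rfl⟩
  obtain ⟨b, hb⟩ : ∃ b, b = t ^ 2 / (2 + t) / 4 := ⟨_, rfl⟩
  have hab : b < a := by rw [ha, hb, hu]; exact key_gap ht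
  obtain ⟨δ, hδdef⟩ : ∃ δ, δ = a - b := ⟨_, rfl⟩
  have hδ : 0 < δ := by rw [hδdef]; linarith
  refine ⟨max 2 (Nat.ceil (Real.exp (t / δ)) + 1), ?_⟩
  intro n hn
  have hn2 : 2 ≤ n := le_trans (le_max_left _ _) hn
  have hnpos : 0 < n := by omega
  have hnR1 : (1 : ℝ) ≤ (n : ℝ) := by exact_mod_cast Nat.one_le_of_lt hn2
  have hnRpos : (0 : ℝ) < (n : ℝ) := by linarith
  -- log n is large
  have hceil : (Nat.ceil (Real.exp (t / δ)) + 1 : ℕ) ≤ n := le_trans (le_max_right _ _) hn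
  have hexp_le : Real.exp (t / δ) ≤ (n : ℝ) := by
    calc Real.exp (t / δ) ≤ (Nat.ceil (Real.exp (t / δ)) : ℝ) := Nat.le_ceil _
      _ ≤ (n : ℝ) := by exact_mod_cast Nat.le_of_succ_le hceil
  obtain ⟨L, hL⟩ : ∃ L, L = Real.log n := ⟨_, rfl⟩
  have hL0 : 0 ≤ L := hL ▸ Real.log_nonneg hnR1
  have hLge : t / δ ≤ L := by
    rw [hL, Real.le_log_iff_exp_le hnRpos]
    exact hexp_le
  have htδL : t ≤ δ * L := by
    rw [div_le_iff₀ hδ] at hLge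
    linarith
  obtain ⟨k, hk⟩ : ∃ k, k = Nat.floor ((1 + t) * L) + 1 := ⟨_, rfl⟩
  -- event inclusion
  have hsub : Finset.univ.filter
        (fun f : Fin n → Fin n => (cycleCount f : ℝ) > (1 + t) * Real.log n) ⊆
      Finset.univ.filter (fun f : Fin n → Fin n => k ≤ cycleCount f) := by
    apply Finset.monotone_filter_right
    intro f _ hf
    rw [← hL] at hf
    have h0 : (0:ℝ) ≤ (1 + t) * L := mul_nonneg (by linarith) hL0
    have hlt : Nat.floor ((1 + t) * L) < cycleCount f :=
      (Nat.floor_lt h0).mpr hf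
    omega
  -- probability bound via Chernoff
  have huniv : ((Finset.univ : Finset (Fin n → Fin n)).card : ℝ) = (n : ℝ) ^ n := by
    rw [Finset.card_univ, Fintype.card_fun, Fintype.card_fin]
    push_cast
    ring
  have htail := tail_bound hnpos k ht.le
  have hcardle : ((Finset.univ.filter
      (fun f : Fin n → Fin n => (cycleCount f : ℝ) > (1 + t) * Real.log n)).card : ℝ) ≤
      ((Finset.univ.filter (fun f : Fin n → Fin n => k ≤ cycleCount f)).card : ℝ) := by
    exact_mod_cast Finset.card_le_card hsub
  have h1tpos : (0:ℝ) < 1 + t := by linarith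
  have hpowpos : (0:ℝ) < (1 + t) ^ k := by positivity
  have hPr : mapPr n (fun f => (cycleCount f : ℝ) > (1 + t) * Real.log n) ≤
      Real.exp (t * Hsum n) / (1 + t) ^ k := by
    rw [mapPr, huniv]
    rw [div_le_div_iff₀ (by positivity) hpowpos]
    calc ((Finset.univ.filter
          (fun f : Fin n → Fin n => (cycleCount f : ℝ) > (1 + t) * Real.log n)).card : ℝ) *
          (1 + t) ^ k
        ≤ ((Finset.univ.filter (fun f : Fin n → Fin n => k ≤ cycleCount f)).card : ℝ) *
          (1 + t) ^ k := by
          apply mul_le_mul_of_nonneg_right hcardle hpowpos.le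
      _ ≤ (n : ℝ) ^ n * Real.exp (t * Hsum n) := htail
      _ = Real.exp (t * Hsum n) * (n : ℝ) ^ n := mul_comm _ _
  -- rewrite as exponential
  have hpow_exp : ((1 + t) : ℝ) ^ k = Real.exp (k * Real.log (1 + t)) := by
    rw [← Real.log_pow, Real.exp_log hpowpos]
  have hPr2 : mapPr n (fun f => (cycleCount f : ℝ) > (1 + t) * Real.log n) ≤
      Real.exp (t * Hsum n - k * Real.log (1 + t)) := by
    rw [Real.exp_sub, ← hpow_exp]
    exact hPr
  -- bound the exponent
  have hHsum : Hsum n ≤ 1 + L := hL ▸ Hsum_le_log n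
  have hkge : (1 + t) * L ≤ (k : ℝ) := by
    have := Nat.lt_floor_add_one ((1 + t) * L)
    push_cast [hk]
    push_cast at this
    linarith
  have hlog1t : 0 ≤ Real.log (1 + t) := Real.log_nonneg (by linarith)
  have hexp1 : t * Hsum n - k * Real.log (1 + t) ≤
      t * (1 + L) - ((1 + t) * L) * Real.log (1 + t) := by
    have e1 : t * Hsum n ≤ t * (1 + L) := mul_le_mul_of_nonneg_left hHsum ht.le
    have e2 : ((1 + t) * L) * Real.log (1 + t) ≤ (k : ℝ) * Real.log (1 + t) :=
      mul_le_mul_of_nonneg_right hkge hlog1t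
    linarith
  have hkey : a ≤ (1 + t) * Real.log (1 + t) - t := by
    rw [ha, hu]; exact key_log ht
  have hexp2 : t * (1 + L) - ((1 + t) * L) * Real.log (1 + t) ≤ t - L * a := by
    have h' : L * a ≤ L * ((1 + t) * Real.log (1 + t) - t) :=
      mul_le_mul_of_nonneg_left hkey hL0
    have h'' : L * ((1 + t) * Real.log (1 + t) - t) =
        ((1 + t) * L) * Real.log (1 + t) - L * t := by ring
    linarith only [h', h'']
  have hexp3 : t - L * a ≤ - (L * b) := by
    have h' : L * a = L * δ + L * b := by
      rw [hδdef]; ring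
    have h'' : δ * L = L * δ := mul_comm δ L
    linarith only [htδL, h', h'']
  have hfinal : mapPr n (fun f => (cycleCount f : ℝ) > (1 + t) * Real.log n) ≤
      Real.exp (-(L * b)) := by
    calc mapPr n (fun f => (cycleCount f : ℝ) > (1 + t) * Real.log n)
        ≤ Real.exp (t * Hsum n - k * Real.log (1 + t)) := hPr2
      _ ≤ Real.exp (-(L * b)) := by
          apply Real.exp_le_exp.mpr
          linarith [hexp1, hexp2, hexp3]
  calc mapPr n (fun f => (cycleCount f : ℝ) > (1 + t) * Real.log n)
      ≤ Real.exp (-(L * b)) := hfinal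
    _ = Real.exp (-(t ^ 2 / (2 + t)) * Real.log n / 4) := by
        congr 1
        rw [hL, hb]
        ring
    _ ≤ (1 + ε) * Real.exp (-(t ^ 2 / (2 + t)) * Real.log n / 4) := by
        nlinarith [Real.exp_pos (-(t ^ 2 / (2 + t)) * Real.log n / 4), hε]
end

section
/- Let Y_n = |M(f)| denote the size of the core of a uniformly random function f : {1,…,n} → {1,…,n}. Then for all real numbers 0 < a < b, the probability P(a·√n ≤ Y_n ≤ b·√n) converges, as n → ∞, to e^{−a²/2} − e^{−b²/2}. -/
open scoped Classical

namespace CoreCount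

open Finset Function

variable {n : ℕ}

noncomputable def SuppF (D : Finset (Fin n)) : Finset (Fin n → Fin n) :=
  univ.filter (fun f => ∀ x, x ∉ D → f x = x)

noncomputable def relCore (D : Finset (Fin n)) (f : Fin n → Fin n) : Finset (Fin n) :=
  D.filter (fun x => inCore f x)

noncomputable def Acyc (E : Finset (Fin n)) : Finset (Fin n → Fin n) :=
  (SuppF E).filter (fun g => relCore E g = ∅)

noncomputable def aCount (E : Finset (Fin n)) : ℕ := (Acyc E).card

lemma mem_SuppF {D : Finset (Fin n)} {f : Fin n → Fin n} :
    f ∈ SuppF D ↔ ∀ x, x ∉ D → f x = x := by simp [SuppF]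

lemma mem_relCore {D : Finset (Fin n)} {f : Fin n → Fin n} {x : Fin n} :
    x ∈ relCore D f ↔ x ∈ D ∧ inCore f x := by simp [relCore]

lemma iterate_stuck {f : Fin n → Fin n} {E : Finset (Fin n)}
    (hf : ∀ x, x ∉ E → f x = x) {y : Fin n} (hy : y ∉ E) (i : ℕ) : f^[i] y = y := by
  induction i with
  | zero => rfl
  | succ i ih => rw [Function.iterate_succ_apply', ih, hf y hy]

lemma orbit_mem {f : Fin n → Fin n} {E : Finset (Fin n)}
    (hf : ∀ x, x ∉ E → f x = x) {x : Fin n} (hx : x ∈ E) {j : ℕ} (hj1 : 1 ≤ j)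
    (hj : f^[j] x = x) (i : ℕ) : f^[i] x ∈ E := by
  by_contra h
  have hstuck : ∀ t, f^[t] (f^[i] x) = f^[i] x := iterate_stuck hf h
  have h1 : f^[j * (i+1)] x = x := by
    rw [Function.iterate_mul]; exact Function.iterate_fixed hj _
  have hge : i ≤ j * (i+1) := by nlinarith
  have h2 : f^[j * (i+1)] x = f^[i] x := by
    have := Function.iterate_add_apply f (j*(i+1) - i) i x
    rw [Nat.sub_add_cancel hge] at this
    rw [this, hstuck]
  rw [h1] at h2
  exact h (h2 ▸ hx)

/-- iterates stay in a set the function maps into itself -/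
lemma iter_mem {f : Fin n → Fin n} {S : Finset (Fin n)}
    (hm : ∀ a ∈ S, f a ∈ S) {a : Fin n} (ha : a ∈ S) (i : ℕ) : f^[i] a ∈ S := by
  induction i with
  | zero => exact ha
  | succ i ih => rw [Function.iterate_succ_apply']; exact hm _ ih

lemma iter_cancel {f : Fin n → Fin n} {S : Finset (Fin n)}
    (hm : ∀ a ∈ S, f a ∈ S) (hi : ∀ a ∈ S, ∀ b ∈ S, f a = f b → a = b)
    (i : ℕ) : ∀ a ∈ S, ∀ b ∈ S, f^[i] a = f^[i] b → a = b := by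
  induction i with
  | zero => intro a _ b _ h; exact h
  | succ i ih =>
      intro a ha b hb h
      rw [Function.iterate_succ_apply, Function.iterate_succ_apply] at h
      exact hi a ha b hb (ih _ (hm a ha) _ (hm b hb) h)

/-- pigeonhole: on a finite invariant set where f is injective, every point is periodic -/
lemma inCore_of_maps {f : Fin n → Fin n} {S : Finset (Fin n)}
    (hm : ∀ a ∈ S, f a ∈ S) (hi : ∀ a ∈ S, ∀ b ∈ S, f a = f b → a = b)
    {x : Fin n} (hx : x ∈ S) : inCore f x := by
  have hmaps : ∀ i ∈ Finset.range (S.card + 1), f^[i] x ∈ S := fun i _ => iter_mem hm hx i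
  obtain ⟨i, hi', j, hj', hne, heq⟩ :=
    Finset.exists_ne_map_eq_of_card_lt_of_maps_to (by simp) hmaps
  rcases Ne.lt_or_gt hne with hlt | hlt
  · -- i < j : f^[i] x = f^[j] x
    refine ⟨j - i, by omega, ?_⟩
    have : f^[i] (f^[j-i] x) = f^[i] x := by
      rw [← Function.iterate_add_apply, Nat.add_sub_cancel' hlt.le, heq]
    exact iter_cancel hm hi i _ (iter_mem hm hx _) _ hx this
  · refine ⟨i - j, by omega, ?_⟩
    have : f^[j] (f^[i-j] x) = f^[j] x := by
      rw [← Function.iterate_add_apply, Nat.add_sub_cancel' hlt.le, ← heq]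
    exact iter_cancel hm hi j _ (iter_mem hm hx _) _ hx this

lemma relCore_maps {D : Finset (Fin n)} {f : Fin n → Fin n} (hf : f ∈ SuppF D) :
    ∀ x ∈ relCore D f, f x ∈ relCore D f := by
  rw [mem_SuppF] at hf
  intro x hx
  rw [mem_relCore] at hx
  obtain ⟨hxD, j, hj1, hj⟩ := hx
  rw [mem_relCore]
  constructor
  · have := orbit_mem hf hxD hj1 hj 1
    simpa using this
  · exact ⟨j, hj1, by rw [← Function.iterate_succ_apply, Function.iterate_succ_apply', hj]⟩

lemma relCore_injOn {D : Finset (Fin n)} {f : Fin n → Fin n} :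
    ∀ x ∈ relCore D f, ∀ y ∈ relCore D f, f x = f y → x = y := by
  intro x hx y hy hfxy
  rw [mem_relCore] at hx hy
  obtain ⟨-, j, hj1, hj⟩ := hx
  obtain ⟨-, k, hk1, hk⟩ := hy
  have hx' : f^[j*k] x = x := by rw [Function.iterate_mul]; exact Function.iterate_fixed hj _
  have hy' : f^[j*k] y = y := by
    rw [mul_comm, Function.iterate_mul]; exact Function.iterate_fixed hk _
  have h1 : 1 ≤ j * k := by nlinarith
  calc x = f^[j*k] x := hx'.symm
    _ = f^[j*k - 1] (f x) := by
        rw [← Function.iterate_succ_apply]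
        congr 1; omega
    _ = f^[j*k - 1] (f y) := by rw [hfxy]
    _ = f^[j*k] y := by rw [← Function.iterate_succ_apply]; congr 1; omega
    _ = y := hy'

lemma relCore_surj {D : Finset (Fin n)} {f : Fin n → Fin n} (hf : f ∈ SuppF D) :
    ∀ y ∈ relCore D f, ∃ x ∈ relCore D f, f x = y := by
  intro y hy
  obtain ⟨x, hx, hxy⟩ := Finset.surj_on_of_inj_on_of_card_le
    (s := relCore D f) (t := relCore D f) (fun a _ => f a)
    (fun a ha => relCore_maps hf a ha)
    (fun a b ha hb h => relCore_injOn a ha b hb h) le_rfl y hy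
  exact ⟨x, hx, hxy.symm⟩

end CoreCount
namespace CoreCount
open Finset Function
variable {n : ℕ}

lemma card_SuppF (D : Finset (Fin n)) : (SuppF D).card = n ^ D.card := by
  have : (SuppF D).card = (univ : Finset (↥D → Fin n)).card := by
    refine (Finset.card_bij' (fun f _ => fun x : ↥D => f ↑x)
      (fun g _ => fun x : Fin n => if h : x ∈ D then g ⟨x, h⟩ else x)
      (fun f hf => mem_univ _) (fun g _ => ?_) (fun f hf => ?_) (fun g _ => ?_))
    · rw [mem_SuppF]; intro x hx; simp [hx]
    · rw [mem_SuppF] at hf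
      funext x
      by_cases h : x ∈ D
      · simp [h]
      · simp [h, hf x h]
    · funext x; simp
  rw [this, card_univ, Fintype.card_fun, Fintype.card_fin, Fintype.card_coe]

noncomputable def PermsOf (K : Finset (Fin n)) : Finset (Fin n → Fin n) :=
  (SuppF K).filter (fun p => (∀ x ∈ K, p x ∈ K) ∧ ∀ x ∈ K, ∀ y ∈ K, p x = p y → x = y)

lemma mem_PermsOf {K : Finset (Fin n)} {p : Fin n → Fin n} :
    p ∈ PermsOf K ↔ (∀ x, x ∉ K → p x = x) ∧ (∀ x ∈ K, p x ∈ K) ∧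
      ∀ x ∈ K, ∀ y ∈ K, p x = p y → x = y := by
  simp [PermsOf, mem_SuppF, and_assoc]

lemma card_PermsOf (K : Finset (Fin n)) : (PermsOf K).card = Nat.factorial K.card := by
  have : (PermsOf K).card = (univ : Finset (↥K ↪ ↥K)).card := by
    refine Finset.card_bij'
      (fun p hp => (⟨fun x : ↥K => (⟨p ↑x, (mem_PermsOf.1 hp).2.1 ↑x x.2⟩ : ↥K),
        fun x y hxy => Subtype.ext ((mem_PermsOf.1 hp).2.2 ↑x x.2 ↑y y.2
          (congrArg Subtype.val hxy))⟩ : ↥K ↪ ↥K))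
      (fun e _ => fun x : Fin n => if h : x ∈ K then ↑(e ⟨x, h⟩) else x)
      (fun p hp => mem_univ _) (fun e _ => ?_) (fun p hp => ?_) (fun e _ => ?_)
    · rw [mem_PermsOf]
      refine ⟨fun x hx => by simp [hx], fun x hx => by simp [hx, Finset.coe_mem], ?_⟩
      intro x hx y hy hxy
      simp only [dif_pos hx, dif_pos hy] at hxy
      have := e.injective (Subtype.ext hxy)
      exact congrArg Subtype.val this
    · rw [mem_PermsOf] at hp
      funext x
      by_cases h : x ∈ K
      · simp [h]; rfl
      · simp [h, hp.1 x h]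
    · ext x
      simp [x.2]
  rw [this, card_univ, Fintype.card_embedding_eq, Fintype.card_coe, Nat.descFactorial_self]

end CoreCount
namespace CoreCount
open Finset Function
variable {n : ℕ}

lemma iterate_agree {h₁ h₂ : Fin n → Fin n} {S : Finset (Fin n)}
    (hag : ∀ x ∈ S, h₁ x = h₂ x) {x : Fin n}
    (horb : ∀ i, h₁^[i] x ∈ S) : ∀ i, h₂^[i] x = h₁^[i] x := by
  intro i
  induction i with
  | zero => rfl
  | succ i ih =>
      rw [Function.iterate_succ_apply', Function.iterate_succ_apply', ih,
        ← hag _ (horb i)]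

lemma restK_mem {D K : Finset (Fin n)} {f : Fin n → Fin n} (hf : f ∈ SuppF D)
    (hK : relCore D f = K) :
    (fun x => if x ∈ K then f x else x) ∈ PermsOf K := by
  rw [mem_PermsOf]
  refine ⟨fun x hx => by simp [hx], fun x hx => ?_, fun x hx y hy h => ?_⟩
  · have := relCore_maps hf x (hK ▸ hx)
    rw [hK] at this
    simpa [hx] using this
  · simp only [if_pos hx, if_pos hy] at h
    exact relCore_injOn x (hK ▸ hx) y (hK ▸ hy) h

lemma restRest_mem {D K : Finset (Fin n)} {f : Fin n → Fin n} (hf : f ∈ SuppF D)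
    (hK : relCore D f = K) :
    (fun x => if x ∈ D \ K then f x else x) ∈ Acyc (D \ K) := by
  set g : Fin n → Fin n := fun x => if x ∈ D \ K then f x else x with hg
  have hgS : g ∈ SuppF (D \ K) := by
    rw [mem_SuppF]; intro x hx; simp only [hg]; rw [if_neg hx]
  rw [Acyc, mem_filter]
  refine ⟨hgS, ?_⟩
  rw [Finset.eq_empty_iff_forall_notMem]
  intro x hx
  rw [mem_relCore] at hx
  obtain ⟨hxDK, j, hj1, hj⟩ := hx
  have horb : ∀ i, g^[i] x ∈ D \ K := orbit_mem (mem_SuppF.1 hgS) hxDK hj1 hj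
  have hagree : ∀ i, f^[i] x = g^[i] x :=
    iterate_agree (fun y hy => by simp only [hg]; rw [if_pos hy]) horb
  have : inCore f x := ⟨j, hj1, by rw [hagree j, hj]⟩
  have hxK : x ∈ K := by
    rw [← hK, mem_relCore]; exact ⟨(mem_sdiff.1 hxDK).1, this⟩
  exact (mem_sdiff.1 hxDK).2 hxK

lemma combine_mem {D K : Finset (Fin n)} (hKD : K ⊆ D) {p g : Fin n → Fin n}
    (hp : p ∈ PermsOf K) (hg : g ∈ Acyc (D \ K)) :
    (fun x => if x ∈ K then p x else g x) ∈ SuppF D ∧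
      relCore D (fun x => if x ∈ K then p x else g x) = K := by
  rw [mem_PermsOf] at hp
  obtain ⟨hp1, hp2, hp3⟩ := hp
  rw [Acyc, mem_filter] at hg
  obtain ⟨hgS, hgA⟩ := hg
  rw [mem_SuppF] at hgS
  set c : Fin n → Fin n := fun x => if x ∈ K then p x else g x with hc
  have hcS : c ∈ SuppF D := by
    rw [mem_SuppF]
    intro x hx
    have hxK : x ∉ K := fun h => hx (hKD h)
    simp only [hc, if_neg hxK]
    exact hgS x (by simp [hx])
  have hcK : ∀ x ∈ K, c x ∈ K := fun x hx => by simpa [hc, hx] using hp2 x hx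
  refine ⟨hcS, ?_⟩
  ext x
  rw [mem_relCore]
  constructor
  · rintro ⟨hxD, j, hj1, hj⟩
    by_contra hxK
    have hxDK : x ∈ D \ K := mem_sdiff.2 ⟨hxD, hxK⟩
    -- orbit can never enter K
    have hnotK : ∀ i, c^[i] x ∉ K := by
      intro i hi
      have hlater : ∀ t, c^[t + i] x ∈ K := by
        intro t
        rw [Function.iterate_add_apply]
        exact iter_mem hcK hi t
      have hT : c^[j * (i + 1)] x = x := by
        rw [Function.iterate_mul]; exact Function.iterate_fixed hj _
      have : c^[(j * (i+1) - i) + i] x ∈ K := hlater _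
      rw [Nat.sub_add_cancel (by nlinarith)] at this
      rw [hT] at this
      exact hxK this
    have horbD : ∀ i, c^[i] x ∈ D := orbit_mem (mem_SuppF.1 hcS) hxD hj1 hj
    have horb : ∀ i, c^[i] x ∈ D \ K := fun i => mem_sdiff.2 ⟨horbD i, hnotK i⟩
    have hagree : ∀ i, g^[i] x = c^[i] x :=
      iterate_agree (fun y hy => by simp [hc, (mem_sdiff.1 hy).2]) horb
    have : x ∈ relCore (D \ K) g := by
      rw [mem_relCore]
      exact ⟨hxDK, j, hj1, by rw [hagree j, hj]⟩
    rw [hgA] at this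
    exact absurd this (Finset.notMem_empty x)
  · intro hxK
    refine ⟨hKD hxK, ?_⟩
    exact inCore_of_maps hcK
      (fun a ha b hb h => by
        simp only [hc, if_pos ha, if_pos hb] at h
        exact hp3 a ha b hb h) hxK

lemma fiber_card {D K : Finset (Fin n)} (hKD : K ⊆ D) :
    ((SuppF D).filter (fun f => relCore D f = K)).card
      = Nat.factorial K.card * aCount (D \ K) := by
  have hbij : ((SuppF D).filter (fun f => relCore D f = K)).card
      = ((PermsOf K) ×ˢ (Acyc (D \ K))).card := by
    refine Finset.card_bij'
      (fun f _ => ((fun x => if x ∈ K then f x else x), (fun x => if x ∈ D \ K then f x else x)))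
      (fun pg _ => fun x => if x ∈ K then pg.1 x else pg.2 x)
      (fun f hf => ?_) (fun pg hpg => ?_) (fun f hf => ?_) (fun pg hpg => ?_)
    · rw [mem_filter] at hf
      exact Finset.mem_product.2 ⟨restK_mem hf.1 hf.2, restRest_mem hf.1 hf.2⟩
    · rw [Finset.mem_product] at hpg
      obtain ⟨h1, h2⟩ := combine_mem hKD hpg.1 hpg.2
      rw [mem_filter]
      exact ⟨h1, h2⟩
    · rw [mem_filter] at hf
      obtain ⟨hfS, hfK⟩ := hf
      funext x
      by_cases hK : x ∈ K
      · simp [hK]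
      · by_cases hD : x ∈ D
        · simp [hK, mem_sdiff.2 ⟨hD, hK⟩]
        · have hDK : x ∉ D \ K := fun h => hD (mem_sdiff.1 h).1
          simp only [if_neg hK, if_neg hDK]
          exact ((mem_SuppF.1 hfS) x hD).symm
    · rw [Finset.mem_product] at hpg
      obtain ⟨hp, hg⟩ := hpg
      have hp1 := (mem_PermsOf.1 hp).1
      have hg1 := mem_SuppF.1 (Finset.mem_filter.1 hg).1
      cases pg with
      | mk p g =>
        simp only at hp1 hg1 ⊢
        rw [Prod.mk.injEq]
        constructor <;> funext x
        · by_cases hK : x ∈ K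
          · rw [if_pos hK, if_pos hK]
          · rw [if_neg hK]; exact (hp1 x hK).symm
        · by_cases hDK : x ∈ D \ K
          · rw [if_pos hDK, if_neg (mem_sdiff.1 hDK).2]
          · rw [if_neg hDK]; exact (hg1 x hDK).symm
  rw [hbij, Finset.card_product, card_PermsOf, aCount]

end CoreCount
namespace CoreCount
open Finset Function
variable {n : ℕ}

noncomputable def gFun (n c : ℕ) : ℕ := if c = 0 then 1 else (n - c) * n ^ (c - 1)

lemma decomp (D : Finset (Fin n)) :
    n ^ D.card = ∑ K ∈ D.powerset, Nat.factorial K.card * aCount (D \ K) := by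
  rw [← card_SuppF D,
    Finset.card_eq_sum_card_fiberwise (f := relCore D) (t := D.powerset)
      (fun f _ => by rw [mem_coe, mem_powerset]; exact filter_subset _ _)]
  exact Finset.sum_congr rfl fun K hK => fiber_card (mem_powerset.1 hK)

lemma gIdentity (n : ℕ) : ∀ c ≤ n,
    ∑ j ∈ Finset.range (c+1), Nat.choose c j * Nat.factorial j * gFun n (c - j) = n ^ c := by
  intro c
  induction c with
  | zero => simp [gFun]
  | succ c ih =>
    intro hc
    rw [Finset.sum_range_succ']
    have h0 : Nat.choose (c+1) 0 * Nat.factorial 0 * gFun n (c + 1 - 0) = gFun n (c+1) := by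
      simp
    rw [h0]
    have hterm : ∀ j, Nat.choose (c+1) (j+1) * Nat.factorial (j+1) * gFun n (c + 1 - (j+1))
        = (c+1) * (Nat.choose c j * Nat.factorial j * gFun n (c - j)) := by
      intro j
      have key : Nat.choose (c+1) (j+1) * Nat.factorial (j+1)
          = (c+1) * (Nat.choose c j * Nat.factorial j) := by
        have h1 := Nat.add_one_mul_choose_eq c j
        rw [Nat.factorial_succ]
        calc Nat.choose (c+1) (j+1) * ((j+1) * Nat.factorial j)
            = (Nat.choose (c+1) (j+1) * (j+1)) * Nat.factorial j := by ring
          _ = ((c+1) * Nat.choose c j) * Nat.factorial j := by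
              rw [← h1]
          _ = (c+1) * (Nat.choose c j * Nat.factorial j) := by ring
      have : c + 1 - (j+1) = c - j := by omega
      rw [this, key]; ring
    rw [Finset.sum_congr rfl (fun j _ => hterm j), ← Finset.mul_sum,
      ih (by omega)]
    have hgc : gFun n (c+1) = (n - (c+1)) * n ^ c := by
      simp [gFun]
    rw [hgc]
    have : (n - (c+1)) + (c+1) = n := by omega
    calc (c+1) * n ^ c + (n - (c+1)) * n ^ c = ((n - (c+1)) + (c+1)) * n ^ c := by ring
      _ = n ^ (c+1) := by rw [this, pow_succ]; ring

lemma card_univ_fin : (univ : Finset (Fin n)).card = n := by simp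

lemma a_eq (c : ℕ) : ∀ D : Finset (Fin n), D.card = c → aCount D = gFun n c := by
  induction c using Nat.strong_induction_on with
  | _ c ih =>
    intro D hD
    have hcn : c ≤ n := by
      rw [← hD]
      simpa using card_le_card (subset_univ D)
    have hdec := decomp D
    rw [hD] at hdec
    have hsplit : ∑ K ∈ D.powerset, Nat.factorial K.card * aCount (D \ K)
        = aCount D + ∑ K ∈ D.powerset.erase ∅, Nat.factorial K.card * gFun n (c - K.card) := by
      rw [← Finset.add_sum_erase _ _ (Finset.empty_mem_powerset D)]
      congr 1
      · simp
      · refine Finset.sum_congr rfl fun K hK => ?_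
        have hKne : K ≠ ∅ := (Finset.mem_erase.1 hK).1
        have hKD : K ⊆ D := mem_powerset.1 (Finset.mem_erase.1 hK).2
        have hKpos : 0 < K.card := Finset.card_pos.2 (Finset.nonempty_of_ne_empty hKne)
        have hcard : (D \ K).card = c - K.card := by
          rw [Finset.card_sdiff_of_subset hKD, hD]
        have hlt : (D \ K).card < c := by
          rw [hcard]
          have hKc : K.card ≤ c := by rw [← hD]; exact card_le_card hKD
          omega
        rw [ih _ (hcard ▸ hlt) _ rfl, hcard]
    have hsplit2 : ∑ K ∈ D.powerset, Nat.factorial K.card * gFun n (c - K.card)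
        = gFun n c + ∑ K ∈ D.powerset.erase ∅, Nat.factorial K.card * gFun n (c - K.card) := by
      rw [← Finset.add_sum_erase _ _ (Finset.empty_mem_powerset D)]
      congr 1
      simp
    have hfull : ∑ K ∈ D.powerset, Nat.factorial K.card * gFun n (c - K.card) = n ^ c := by
      rw [Finset.sum_powerset_apply_card (f := fun j => Nat.factorial j * gFun n (c - j)), hD]
      rw [← gIdentity n c hcn]
      exact Finset.sum_congr rfl fun j _ => by rw [smul_eq_mul, mul_assoc]
    have e1 : n ^ c = aCount D + ∑ K ∈ D.powerset.erase ∅,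
        Nat.factorial K.card * gFun n (c - K.card) := by rw [hdec, hsplit]
    have e2 : n ^ c = gFun n c + ∑ K ∈ D.powerset.erase ∅,
        Nat.factorial K.card * gFun n (c - K.card) := by rw [← hfull, hsplit2]
    omega

lemma SuppF_univ : SuppF (univ : Finset (Fin n)) = univ := by
  simp [SuppF]

lemma N_count (m : ℕ) (hm : m ≤ n) :
    (univ.filter (fun f : Fin n → Fin n => (relCore univ f).card = m)).card
      = Nat.choose n m * Nat.factorial m * gFun n (n - m) := by
  rw [Finset.card_eq_sum_card_fiberwise (f := relCore univ) (t := Finset.powersetCard m univ)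
    (fun f hf => by
      rw [mem_coe, Finset.mem_powersetCard]
      exact ⟨subset_univ _, (Finset.mem_filter.1 (mem_coe.1 hf)).2⟩)]
  have hfib : ∀ K ∈ Finset.powersetCard m (univ : Finset (Fin n)),
      ((univ.filter (fun f : Fin n → Fin n => (relCore univ f).card = m)).filter
        (fun f => relCore univ f = K)).card = Nat.factorial m * gFun n (n - m) := by
    intro K hK
    rw [Finset.mem_powersetCard] at hK
    have heq : (univ.filter (fun f : Fin n → Fin n => (relCore univ f).card = m)).filter
        (fun f => relCore univ f = K) = (SuppF univ).filter (fun f => relCore univ f = K) := by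
      rw [SuppF_univ, Finset.filter_filter]
      refine Finset.filter_congr fun f _ => ?_
      constructor
      · exact fun h => h.2
      · exact fun h => ⟨by rw [h, hK.2], h⟩
    have hcard : (univ \ K).card = n - m := by
      rw [Finset.card_sdiff_of_subset (subset_univ K), card_univ_fin, hK.2]
    rw [heq, fiber_card (subset_univ K), hK.2, a_eq (n - m) _ hcard]
  rw [Finset.sum_congr rfl hfib, Finset.sum_const, Finset.card_powersetCard, card_univ_fin,
    smul_eq_mul, mul_assoc]

lemma tail_le (d : ℕ) (hd : d ≤ n) :
    (univ.filter (fun f : Fin n → Fin n => n - d ≤ (relCore univ f).card)).card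
      = Nat.descFactorial n (n - d) * n ^ d := by
  induction d with
  | zero =>
    have hpred : ∀ f : Fin n → Fin n,
        (n - 0 ≤ (relCore univ f).card) ↔ ((relCore univ f).card = n) := by
      intro f
      have : (relCore univ f).card ≤ n := by
        simpa [relCore] using card_le_card (filter_subset (fun x => inCore f x) univ)
      omega
    rw [Finset.filter_congr (fun f _ => by rw [hpred f]), N_count n le_rfl]
    simp [gFun, Nat.descFactorial_self]
  | succ d ihd =>
    have hd' : d ≤ n := by omega
    set k := n - (d+1) with hk
    have hk1 : k + 1 = n - d := by omega
    have hkn : k ≤ n := by omega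
    have hunion : (univ.filter (fun f : Fin n → Fin n => k ≤ (relCore univ f).card))
        = (univ.filter (fun f : Fin n → Fin n => (relCore univ f).card = k))
          ∪ (univ.filter (fun f : Fin n → Fin n => k + 1 ≤ (relCore univ f).card)) := by
      ext f
      simp only [Finset.mem_union, Finset.mem_filter, Finset.mem_univ, true_and]
      omega
    have hdisj : Disjoint
        (univ.filter (fun f : Fin n → Fin n => (relCore univ f).card = k))
        (univ.filter (fun f : Fin n → Fin n => k + 1 ≤ (relCore univ f).card)) := by
      rw [Finset.disjoint_left]
      intro f hf1 hf2
      rw [Finset.mem_filter] at hf1 hf2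
      omega
    rw [hunion, Finset.card_union_of_disjoint hdisj, N_count k hkn, hk1, ihd hd']
    rw [show n - d = k + 1 by omega, Nat.descFactorial_succ,
      Nat.descFactorial_eq_factorial_mul_choose]
    have hgk : gFun n (n - k) = k * n ^ d := by
      have h1 : n - k = d + 1 := by omega
      rw [h1]
      simp only [gFun, Nat.succ_ne_zero, if_false]
      have h2 : n - (d+1) = k := by omega
      rw [h2]
      congr 1
    rw [hgk]
    have hnk : k + (n - k) = n := by omega
    have expand : n.choose k * Nat.factorial k * (k * n ^ d)
        + (n - k) * (Nat.factorial k * n.choose k) * n ^ d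
        = (Nat.factorial k * n.choose k) * ((k + (n - k)) * n ^ d) := by ring
    rw [expand, hnk, pow_succ]
    ring

end CoreCount
namespace CoreCount
open Finset Function Filter Real

variable {n : ℕ}

lemma tail (k : ℕ) (hk : k ≤ n) :
    (univ.filter (fun f : Fin n → Fin n => k ≤ (relCore univ f).card)).card
      = Nat.descFactorial n k * n ^ (n - k) := by
  have := tail_le (n := n) (n - k) (by omega)
  rwa [Nat.sub_sub_self hk] at this

lemma tail_prob {k n : ℕ} (hk : k ≤ n) (hn : 0 < n) :
    ((Nat.descFactorial n k * n ^ (n - k) : ℕ) : ℝ) / (n : ℝ) ^ n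
      = ∏ i ∈ Finset.range k, (1 - (i : ℝ) / n) := by
  have hnR : (0:ℝ) < n := by exact_mod_cast hn
  have h1 : ((Nat.descFactorial n k : ℕ) : ℝ) = ∏ i ∈ Finset.range k, ((n : ℝ) - i) := by
    rw [Nat.descFactorial_eq_prod_range, Nat.cast_prod]
    refine Finset.prod_congr rfl fun i hi => ?_
    have hi' : i ≤ n := le_trans (le_of_lt (Finset.mem_range.1 hi)) hk
    rw [Nat.cast_sub hi']
  have h2 : (n:ℝ) ^ n = (n:ℝ) ^ (n - k) * (n:ℝ) ^ k := by
    rw [← pow_add]; congr 1; omega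
  have h3 : (∏ i ∈ Finset.range k, (1 - (i:ℝ)/n)) * (n:ℝ)^k
      = ∏ i ∈ Finset.range k, ((n:ℝ) - i) := by
    have hpc : (n:ℝ)^k = ∏ _i ∈ Finset.range k, (n:ℝ) := by
      rw [Finset.prod_const, Finset.card_range]
    rw [hpc, ← Finset.prod_mul_distrib]
    refine Finset.prod_congr rfl fun i _ => ?_
    field_simp
  push_cast
  rw [h1, h2, ← h3]
  field_simp

lemma sqrt_nat_tendsto : Tendsto (fun N : ℕ => Real.sqrt N) atTop atTop := by
  apply Filter.tendsto_atTop.2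
  intro M
  filter_upwards [Filter.eventually_ge_atTop ((Nat.ceil (max M 0))^2)] with N hN
  have h1 : ((Nat.ceil (max M 0) : ℕ) : ℝ) ≤ Real.sqrt N := by
    have : Real.sqrt (((Nat.ceil (max M 0))^2 : ℕ) : ℝ) ≤ Real.sqrt N :=
      Real.sqrt_le_sqrt (by exact_mod_cast hN)
    rwa [show (((Nat.ceil (max M 0))^2 : ℕ) : ℝ) = ((Nat.ceil (max M 0) : ℕ) : ℝ)^2 by push_cast; ring,
      Real.sqrt_sq (Nat.cast_nonneg _)] at this
  calc M ≤ max M 0 := le_max_left _ _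
    _ ≤ ((Nat.ceil (max M 0) : ℕ) : ℝ) := Nat.le_ceil _
    _ ≤ Real.sqrt N := h1

lemma inv_sqrt_tendsto : Tendsto (fun N : ℕ => 1 / Real.sqrt N) atTop (nhds 0) := by
  simpa [one_div, Pi.inv_def] using sqrt_nat_tendsto.inv_tendsto_atTop

lemma gauss_sum (M : ℕ) : (∑ i ∈ Finset.range M, (i:ℝ)) = M * (M - 1) / 2 := by
  induction M with
  | zero => simp
  | succ M ih => rw [Finset.sum_range_succ, ih]; push_cast; ring

lemma prod_tendsto {c : ℝ} (hc : 0 < c) (m : ℕ → ℕ)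
    (hm : Tendsto (fun N => (m N : ℝ) / Real.sqrt N) atTop (nhds c)) :
    Tendsto (fun N => ∏ i ∈ Finset.range (m N), (1 - (i:ℝ)/N)) atTop
      (nhds (Real.exp (-(c^2)/2))) := by
  set t : ℕ → ℝ := fun N => (m N : ℝ) / Real.sqrt N with ht
  set S : ℕ → ℝ := fun N => ∑ i ∈ Finset.range (m N), (i:ℝ)/(N:ℝ) with hSdef
  set U : ℕ → ℝ := fun N => ∑ i ∈ Finset.range (m N), ((i:ℝ)/(N:ℝ))^2 with hUdef
  have hS : Tendsto S atTop (nhds (c^2/2)) := by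
    have heq : ∀ N : ℕ, S N = ((t N)^2 - (m N : ℝ)/N) / 2 := by
      intro N
      rw [hSdef]
      simp only
      rw [← Finset.sum_div, gauss_sum, ht]
      simp only [div_pow, Real.sq_sqrt (Nat.cast_nonneg N)]
      ring
    rw [funext heq]
    have hmn : Tendsto (fun N => (m N:ℝ)/N) atTop (nhds 0) := by
      have heq2 : ∀ N : ℕ, (m N:ℝ)/N = t N * (1 / Real.sqrt N) := by
        intro N
        rw [ht]
        simp only
        rw [div_mul_div_comm, mul_one, Real.mul_self_sqrt (Nat.cast_nonneg N)]
      rw [funext heq2]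
      simpa using hm.mul inv_sqrt_tendsto
    have := ((hm.pow 2).sub hmn).div_const 2
    simpa using this
  have hU : Tendsto U atTop (nhds 0) := by
    have hB : Tendsto (fun N => (t N)^3 * (1 / Real.sqrt N)) atTop (nhds 0) := by
      simpa using (hm.pow 3).mul inv_sqrt_tendsto
    apply tendsto_of_tendsto_of_tendsto_of_le_of_le' (tendsto_const_nhds) hB
    · filter_upwards with N
      rw [hUdef]
      positivity
    · filter_upwards with N
      have hbound : ∀ i ∈ Finset.range (m N), ((i:ℝ)/(N:ℝ))^2 ≤ ((m N:ℝ)/(N:ℝ))^2 := by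
        intro i hi
        have h1 : (i:ℝ) ≤ (m N : ℝ) := by
          exact_mod_cast le_of_lt (Finset.mem_range.1 hi)
        gcongr
      calc U N ≤ ∑ _i ∈ Finset.range (m N), ((m N:ℝ)/(N:ℝ))^2 := Finset.sum_le_sum hbound
        _ = (m N : ℝ) * ((m N:ℝ)/(N:ℝ))^2 := by rw [Finset.sum_const, Finset.card_range]; ring
        _ = (t N)^3 * (1 / Real.sqrt N) := by
            rw [ht]
            simp only [div_pow]
            rcases Nat.eq_zero_or_pos N with h0 | h0
            · subst h0; simp
            · have hN : (0:ℝ) < N := by exact_mod_cast h0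
              have hs : (0:ℝ) < Real.sqrt N := Real.sqrt_pos.2 hN
              have h4 : (Real.sqrt N)^3 * Real.sqrt N = (N:ℝ)^2 := by
                rw [← pow_succ, show (3+1) = 2*2 from rfl, pow_mul,
                  Real.sq_sqrt (Nat.cast_nonneg N)]
              field_simp
              rw [← h4]
              ring
  have hsmall : ∀ᶠ N : ℕ in atTop, ∀ i ∈ Finset.range (m N),
      (i:ℝ)/(N:ℝ) ≤ 1/2 ∧ 0 ≤ (i:ℝ)/(N:ℝ) := by
    have h1 : ∀ᶠ N : ℕ in atTop, t N ≤ c + 1 :=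
      hm.eventually (eventually_le_nhds (lt_add_one c))
    have h2 : ∀ᶠ N : ℕ in atTop, 2 * (c + 1) ≤ Real.sqrt N :=
      sqrt_nat_tendsto.eventually_ge_atTop _
    have h3 : ∀ᶠ N : ℕ in atTop, 0 < N := Filter.eventually_gt_atTop 0
    filter_upwards [h1, h2, h3] with N hN1 hN2 hN3 i hi
    have hNpos : (0:ℝ) < N := by exact_mod_cast hN3
    have hspos : (0:ℝ) < Real.sqrt N := Real.sqrt_pos.2 hNpos
    have hm' : (m N : ℝ) ≤ (c+1) * Real.sqrt N := by
      rw [ht] at hN1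
      calc (m N : ℝ) = ((m N : ℝ)/Real.sqrt N) * Real.sqrt N := by field_simp
        _ ≤ (c+1) * Real.sqrt N := mul_le_mul_of_nonneg_right hN1 hspos.le
    have hiN : (i:ℝ) ≤ (c+1) * Real.sqrt N := by
      have h5 : (i:ℝ) ≤ (m N : ℝ) := by exact_mod_cast le_of_lt (Finset.mem_range.1 hi)
      linarith
    refine ⟨?_, by positivity⟩
    rw [div_le_iff₀ hNpos]
    calc (i:ℝ) ≤ (c+1) * Real.sqrt N := hiN
      _ ≤ (Real.sqrt N / 2) * Real.sqrt N := by
          apply mul_le_mul_of_nonneg_right _ hspos.le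
          linarith
      _ = (Real.sqrt N * Real.sqrt N) / 2 := by ring
      _ = 1/2 * (N:ℝ) := by rw [Real.mul_self_sqrt (Nat.cast_nonneg N)]; ring
  have hupper : ∀ᶠ N : ℕ in atTop,
      (∏ i ∈ Finset.range (m N), (1 - (i:ℝ)/N)) ≤ Real.exp (-(S N)) := by
    filter_upwards [hsmall] with N hN
    have : -(S N) = ∑ i ∈ Finset.range (m N), -((i:ℝ)/N) := by
      rw [hSdef]; simp only [Finset.sum_neg_distrib]
    rw [this, Real.exp_sum]
    apply Finset.prod_le_prod
    · intro i hi
      have h := hN i hi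
      linarith [h.1]
    · intro i hi
      have h := Real.add_one_le_exp (-((i:ℝ)/N))
      linarith
  have hlower : ∀ᶠ N : ℕ in atTop,
      Real.exp (-(S N) - 2 * U N) ≤ ∏ i ∈ Finset.range (m N), (1 - (i:ℝ)/N) := by
    filter_upwards [hsmall] with N hN
    have heq3 : -(S N) - 2 * U N
        = ∑ i ∈ Finset.range (m N), (-((i:ℝ)/N) - 2 * ((i:ℝ)/N)^2) := by
      rw [hSdef, hUdef]
      simp only [Finset.sum_sub_distrib, Finset.sum_neg_distrib, Finset.mul_sum]
    rw [heq3, Real.exp_sum]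
    apply Finset.prod_le_prod
    · intro i _
      positivity
    · intro i hi
      obtain ⟨hle, hge⟩ := hN i hi
      set x := (i:ℝ)/N with hx
      have hE := Real.add_one_le_exp (x + 2*x^2)
      have hEpos : (0:ℝ) < Real.exp (x + 2*x^2) := Real.exp_pos _
      have key : 1 ≤ (1 - x) * Real.exp (x + 2*x^2) := by nlinarith
      have hrw : Real.exp (-x - 2*x^2) = 1 / Real.exp (x + 2*x^2) := by
        have hxx : -x - 2*x^2 = -(x + 2*x^2) := by ring
        rw [hxx, Real.exp_neg, one_div]
      rw [hrw, div_le_iff₀ hEpos]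
      linarith
  have hSU : Tendsto (fun N => -(S N) - 2 * U N) atTop (nhds (-(c^2/2) - 2*0)) :=
    hS.neg.sub (hU.const_mul 2)
  have hlowlim : Tendsto (fun N => Real.exp (-(S N) - 2 * U N)) atTop
      (nhds (Real.exp (-(c^2)/2))) := by
    have h := (Real.continuous_exp.tendsto _).comp hSU
    have : -(c^2)/2 = -(c^2/2) - 2*0 := by ring
    rw [this]
    exact h
  have huplim : Tendsto (fun N => Real.exp (-(S N))) atTop (nhds (Real.exp (-(c^2)/2))) := by
    have h := (Real.continuous_exp.tendsto _).comp hS.neg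
    have : -(c^2)/2 = -(c^2/2) := by ring
    rw [this]
    exact h
  exact tendsto_of_tendsto_of_tendsto_of_le_of_le' hlowlim huplim hlower hupper

end CoreCount

namespace CoreCount
open Finset Function Filter Real

theorem core_size_limit_distribution_aux (a b : ℝ) (ha : 0 < a) (hab : a < b) :
    Filter.Tendsto (fun n : ℕ =>
        mapPr n (fun f => a * Real.sqrt n ≤ (Set.ncard {x | inCore f x} : ℝ) ∧
          (Set.ncard {x | inCore f x} : ℝ) ≤ b * Real.sqrt n))
      Filter.atTop
      (nhds (Real.exp (-(a ^ 2) / 2) - Real.exp (-(b ^ 2) / 2))) := by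
  have hb : 0 < b := lt_trans ha hab
  set k : ℕ → ℕ := fun N => ⌈a * Real.sqrt N⌉₊ with hkdef
  set l : ℕ → ℕ := fun N => ⌊b * Real.sqrt N⌋₊ + 1 with hldef
  have hncard : ∀ (N : ℕ) (f : Fin N → Fin N),
      {x | inCore f x}.ncard = (relCore univ f).card := by
    intro N f
    rw [Set.ncard_eq_toFinset_card', Set.toFinset_setOf]
    rfl
  -- tendsto of k/√N and l/√N
  have hk_tend : Tendsto (fun N => (k N : ℝ) / Real.sqrt N) atTop (nhds a) := by
    have hup : Tendsto (fun N : ℕ => a + 1 / Real.sqrt N) atTop (nhds a) := by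
      have := tendsto_const_nhds (x := a) (f := atTop (α := ℕ)).add inv_sqrt_tendsto
      simpa using this
    refine tendsto_of_tendsto_of_tendsto_of_le_of_le' tendsto_const_nhds hup ?_ ?_
    · filter_upwards [Filter.eventually_ge_atTop 1] with N hN
      have hs : (0:ℝ) < Real.sqrt N := Real.sqrt_pos.2 (by exact_mod_cast hN)
      rw [le_div_iff₀ hs]
      exact Nat.le_ceil _
    · filter_upwards [Filter.eventually_ge_atTop 1] with N hN
      have hs : (0:ℝ) < Real.sqrt N := Real.sqrt_pos.2 (by exact_mod_cast hN)
      rw [div_le_iff₀ hs]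
      have h1 : (k N : ℝ) < a * Real.sqrt N + 1 :=
        Nat.ceil_lt_add_one (by positivity)
      have h2 : (a + 1 / Real.sqrt N) * Real.sqrt N = a * Real.sqrt N + 1 := by
        field_simp
      rw [h2]
      linarith
  have hl_tend : Tendsto (fun N => (l N : ℝ) / Real.sqrt N) atTop (nhds b) := by
    have hup : Tendsto (fun N : ℕ => b + 1 / Real.sqrt N) atTop (nhds b) := by
      have := tendsto_const_nhds (x := b) (f := atTop (α := ℕ)).add inv_sqrt_tendsto
      simpa using this
    refine tendsto_of_tendsto_of_tendsto_of_le_of_le' tendsto_const_nhds hup ?_ ?_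
    · filter_upwards [Filter.eventually_ge_atTop 1] with N hN
      have hs : (0:ℝ) < Real.sqrt N := Real.sqrt_pos.2 (by exact_mod_cast hN)
      rw [le_div_iff₀ hs]
      have := Nat.lt_floor_add_one (b * Real.sqrt N)
      have hcast : (l N : ℝ) = (⌊b * Real.sqrt N⌋₊ : ℝ) + 1 := by
        rw [hldef]; push_cast; ring
      rw [hcast]
      linarith
    · filter_upwards [Filter.eventually_ge_atTop 1] with N hN
      have hs : (0:ℝ) < Real.sqrt N := Real.sqrt_pos.2 (by exact_mod_cast hN)
      rw [div_le_iff₀ hs]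
      have h1 : ((⌊b * Real.sqrt N⌋₊ : ℕ) : ℝ) ≤ b * Real.sqrt N :=
        Nat.floor_le (by positivity)
      have hcast : (l N : ℝ) = (⌊b * Real.sqrt N⌋₊ : ℝ) + 1 := by
        rw [hldef]; push_cast; ring
      have h2 : (b + 1 / Real.sqrt N) * Real.sqrt N = b * Real.sqrt N + 1 := by
        field_simp
      rw [hcast, h2]
      linarith
  -- eventual identification of the probability
  have hev : ∀ᶠ N : ℕ in atTop,
      mapPr N (fun f => a * Real.sqrt N ≤ (Set.ncard {x | inCore f x} : ℝ) ∧
          (Set.ncard {x | inCore f x} : ℝ) ≤ b * Real.sqrt N)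
        = (∏ i ∈ Finset.range (k N), (1 - (i:ℝ)/N))
          - (∏ i ∈ Finset.range (l N), (1 - (i:ℝ)/N)) := by
    filter_upwards [sqrt_nat_tendsto.eventually_ge_atTop (b + 1),
      Filter.eventually_ge_atTop 1] with N hsq hN1
    have hNpos : 0 < N := hN1
    have hNR : (0:ℝ) < N := by exact_mod_cast hNpos
    have hsq1 : (1:ℝ) ≤ Real.sqrt N := by nlinarith [hb]
    have hlN : l N ≤ N := by
      have h1 : (l N : ℝ) ≤ b * Real.sqrt N + 1 := by
        have := Nat.floor_le (show (0:ℝ) ≤ b * Real.sqrt N by positivity)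
        rw [hldef]; push_cast; linarith
      have h2 : b * Real.sqrt N + 1 ≤ (N:ℝ) := by
        have hNe : (N:ℝ) = Real.sqrt N * Real.sqrt N :=
          (Real.mul_self_sqrt (Nat.cast_nonneg N)).symm
        nlinarith [hsq, hsq1]
      exact_mod_cast le_trans h1 h2
    have hkl : k N ≤ l N := by
      calc k N ≤ ⌊a * Real.sqrt N⌋₊ + 1 := Nat.ceil_le_floor_add_one _
        _ ≤ ⌊b * Real.sqrt N⌋₊ + 1 := by
            have : a * Real.sqrt N ≤ b * Real.sqrt N := by nlinarith [Real.sqrt_nonneg (N:ℝ)]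
            exact Nat.add_le_add_right (Nat.floor_le_floor this) 1
    have hkN : k N ≤ N := le_trans hkl hlN
    -- rewrite the predicate
    have hpred : ∀ f : Fin N → Fin N,
        (a * Real.sqrt N ≤ (Set.ncard {x | inCore f x} : ℝ) ∧
          (Set.ncard {x | inCore f x} : ℝ) ≤ b * Real.sqrt N)
        ↔ (k N ≤ (relCore univ f).card ∧ ¬ (l N ≤ (relCore univ f).card)) := by
      intro f
      rw [hncard N f]
      have e1 : a * Real.sqrt N ≤ ((relCore univ f).card : ℝ) ↔ k N ≤ (relCore univ f).card :=
        (Nat.ceil_le).symm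
      have e2 : ((relCore univ f).card : ℝ) ≤ b * Real.sqrt N
          ↔ (relCore univ f).card ≤ ⌊b * Real.sqrt N⌋₊ :=
        (Nat.le_floor_iff (by positivity)).symm
      rw [e1, e2]
      have hlval : l N = ⌊b * Real.sqrt N⌋₊ + 1 := rfl
      omega
    have hfilter : (univ.filter (fun f : Fin N → Fin N =>
        a * Real.sqrt N ≤ (Set.ncard {x | inCore f x} : ℝ) ∧
          (Set.ncard {x | inCore f x} : ℝ) ≤ b * Real.sqrt N))
        = (univ.filter (fun f : Fin N → Fin N => k N ≤ (relCore univ f).card))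
          \ (univ.filter (fun f : Fin N → Fin N => l N ≤ (relCore univ f).card)) := by
      ext f
      simp only [Finset.mem_sdiff, Finset.mem_filter, Finset.mem_univ, true_and]
      exact hpred f
    have hsubset : (univ.filter (fun f : Fin N → Fin N => l N ≤ (relCore univ f).card))
        ⊆ (univ.filter (fun f : Fin N → Fin N => k N ≤ (relCore univ f).card)) := by
      intro f hf
      rw [Finset.mem_filter] at hf ⊢
      exact ⟨hf.1, le_trans hkl hf.2⟩
    rw [mapPr, Finset.filter_congr_decidable, hfilter, Finset.card_sdiff_of_subset hsubset]
    rw [tail (k N) hkN, tail (l N) hlN]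
    have hle : Nat.descFactorial N (l N) * N ^ (N - l N)
        ≤ Nat.descFactorial N (k N) * N ^ (N - k N) := by
      rw [← tail (k N) hkN, ← tail (l N) hlN]
      exact Finset.card_le_card hsubset
    have hcard_univ : ((univ : Finset (Fin N → Fin N)).card : ℝ) = (N:ℝ)^N := by
      rw [Finset.card_univ, Fintype.card_fun, Fintype.card_fin]
      push_cast
      ring
    rw [Nat.cast_sub hle, hcard_univ, sub_div]
    rw [← tail_prob hkN hNpos, ← tail_prob hlN hNpos]
  have hA := prod_tendsto ha (fun N => k N) hk_tend
  have hB := prod_tendsto hb (fun N => l N) hl_tend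
  exact Filter.Tendsto.congr' (Filter.EventuallyEq.symm hev) (hA.sub hB)

end CoreCount


theorem core_size_limit_distribution (a b : ℝ) (ha : 0 < a) (hab : a < b) :
    Filter.Tendsto (fun n : ℕ =>
        mapPr n (fun f => a * Real.sqrt n ≤ (Set.ncard {x | inCore f x} : ℝ) ∧
          (Set.ncard {x | inCore f x} : ℝ) ≤ b * Real.sqrt n))
      Filter.atTop
      (nhds (Real.exp (-(a ^ 2) / 2) - Real.exp (-(b ^ 2) / 2))) :=
  CoreCount.core_size_limit_distribution_aux a b ha hab
end

section
/- Let 1 ≤ k < n, S = {1,…,k}, S^c = {k+1,…,n}, and let g : {1,…,n} → {1,…,n} satisfy g(S) ⊆ S^c. Define r(g) : S^c → S^c by r(g)(x) = g(x) if g(x) ∈ S^c, and r(g)(x) = g(g(x)) if g(x) ∈ S. Then r(g) is well defined (takes values in S^c), and the number of cycles of r(g) equals the number of cycles c(g) of g. -/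
open scoped Classical

section Aux

variable {n k : ℕ} (g : Fin n → Fin n) (hg : ∀ x : Fin n, (x : ℕ) < k → k ≤ (g x : ℕ))

/-- the reduced map -/
noncomputable def rmap : {x : Fin n // k ≤ (x : ℕ)} → {x : Fin n // k ≤ (x : ℕ)} :=
  fun x => if h : (g x.1 : ℕ) < k then ⟨g (g x.1), hg _ h⟩ else ⟨g x.1, le_of_not_gt h⟩

lemma rmap_spec (x : {x : Fin n // k ≤ (x : ℕ)}) :
    ((rmap g hg x : Fin n)) = if (g x.1 : ℕ) < k then g (g x.1) else g x.1 := by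
  unfold rmap; split_ifs <;> rfl

lemma rmap_fwd (m : ℕ) (x : {x : Fin n // k ≤ (x : ℕ)}) :
    ∃ j, m ≤ j ∧ ((rmap g hg)^[m] x : Fin n) = g^[j] x.1 := by
  induction m with
  | zero => exact ⟨0, le_refl _, rfl⟩
  | succ m ih =>
    obtain ⟨j, hj, hval⟩ := ih
    rw [Function.iterate_succ_apply']
    rw [rmap_spec]
    split_ifs with h
    · exact ⟨j + 2, by omega, by
        rw [hval, ← Function.iterate_succ_apply' g j, ← Function.iterate_succ_apply' g (j+1)]⟩
    · exact ⟨j + 1, by omega, by rw [hval, ← Function.iterate_succ_apply' g j]⟩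

lemma rmap_bwd (j : ℕ) (x : {x : Fin n // k ≤ (x : ℕ)}) (hj : k ≤ ((g^[j] x.1 : Fin n) : ℕ)) :
    ∃ m, ((rmap g hg)^[m] x : Fin n) = g^[j] x.1 ∧ (1 ≤ j → 1 ≤ m) := by
  induction j using Nat.strong_induction_on with
  | _ j ih =>
    match j with
    | 0 => exact ⟨0, rfl, by omega⟩
    | jj + 1 =>
      by_cases hz : ((g^[jj] x.1 : Fin n) : ℕ) < k
      · -- previous point in S; go back two
        match jj with
        | 0 => exact absurd x.2 (by simpa using hz)
        | jj' + 1 =>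
          have hw : k ≤ ((g^[jj'] x.1 : Fin n) : ℕ) := by
            by_contra hw
            have h2 := hg _ (lt_of_not_ge hw)
            rw [← Function.iterate_succ_apply' g jj'] at h2
            exact absurd h2 (not_le_of_gt hz)
          obtain ⟨m, hm, _⟩ := ih jj' (by omega) hw
          refine ⟨m + 1, ?_, by omega⟩
          rw [Function.iterate_succ_apply', rmap_spec]
          rw [hm, ← Function.iterate_succ_apply' g jj']
          rw [if_pos hz, ← Function.iterate_succ_apply' g (jj' + 1)]
      · obtain ⟨m, hm, _⟩ := ih jj (by omega) (le_of_not_gt hz)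
        refine ⟨m + 1, ?_, by omega⟩
        rw [Function.iterate_succ_apply', rmap_spec, hm,
          ← Function.iterate_succ_apply' g jj, if_neg (not_lt.mpr hj)]

lemma orb_mono {V : Type*} (f : V → V) {a b : V} (h : ∃ m, f^[m] b = a) :
    {y | ∃ j, f^[j] a = y} ⊆ {y | ∃ j, f^[j] b = y} := by
  obtain ⟨m, rfl⟩ := h
  rintro z ⟨j, rfl⟩
  exact ⟨j + m, by rw [Function.iterate_add_apply]⟩

lemma coreR_to_G (x : {x : Fin n // k ≤ (x : ℕ)}) (h : inCore (rmap g hg) x) :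
    inCore g x.1 := by
  obtain ⟨m, hm1, hm⟩ := h
  obtain ⟨j, hj1, hj⟩ := rmap_fwd g hg m x
  exact ⟨j, le_trans hm1 hj1, by rw [← hj, hm]⟩

lemma coreG_to_R (x : {x : Fin n // k ≤ (x : ℕ)}) (h : inCore g x.1) :
    inCore (rmap g hg) x := by
  obtain ⟨j, hj1, hj⟩ := h
  obtain ⟨m, hm, hm1⟩ := rmap_bwd g hg j x (by rw [hj]; exact x.2)
  exact ⟨m, hm1 hj1, Subtype.ext (by rw [hm, hj])⟩

/-- membership in g-orbit implies membership in r-orbit, for points of Sᶜ -/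
lemma memR (x x' : {x : Fin n // k ≤ (x : ℕ)}) (h : ∃ j, g^[j] x.1 = x'.1) :
    ∃ m, (rmap g hg)^[m] x = x' := by
  obtain ⟨j, hj⟩ := h
  obtain ⟨m, hm, -⟩ := rmap_bwd g hg j x (by rw [hj]; exact x'.2)
  exact ⟨m, Subtype.ext (by rw [hm, hj])⟩

lemma orbR_eq (x x' : {x : Fin n // k ≤ (x : ℕ)})
    (h : {y | ∃ j, g^[j] x.1 = y} = {y | ∃ j, g^[j] x'.1 = y}) :
    {y | ∃ m, (rmap g hg)^[m] x = y} = {y | ∃ m, (rmap g hg)^[m] x' = y} := by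
  have h1 : ∃ m, (rmap g hg)^[m] x = x' := by
    apply memR g hg
    have : x'.1 ∈ {y | ∃ j, g^[j] x'.1 = y} := ⟨0, rfl⟩
    rw [← h] at this; exact this
  have h2 : ∃ m, (rmap g hg)^[m] x' = x := by
    apply memR g hg
    have : x.1 ∈ {y | ∃ j, g^[j] x.1 = y} := ⟨0, rfl⟩
    rw [h] at this; exact this
  exact subset_antisymm (orb_mono _ h2) (orb_mono _ h1)

end Aux

theorem reduced_map_cycle_count (n k : ℕ) (hk : 1 ≤ k) (hkn : k < n)
    (g : Fin n → Fin n) (hg : ∀ x : Fin n, (x : ℕ) < k → k ≤ (g x : ℕ)) :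
    ∃ r : {x : Fin n // k ≤ (x : ℕ)} → {x : Fin n // k ≤ (x : ℕ)},
      (∀ x : {x : Fin n // k ≤ (x : ℕ)},
        (r x : Fin n) = if (g x.1 : ℕ) < k then g (g x.1) else g x.1) ∧
      cycleCount r = cycleCount g := by
  refine ⟨rmap g hg, rmap_spec g hg, ?_⟩
  classical
  set Sc := {x : Fin n // k ≤ (x : ℕ)}
  set r := rmap g hg with hr
  set orbR : Sc → Set Sc := fun x => {y | ∃ m, r^[m] x = y} with horbR
  set orbG : Fin n → Set (Fin n) := fun x => {y | ∃ j, g^[j] x = y} with horbG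
  set F : Set Sc → Set (Fin n) := fun O => ⋃ y ∈ O, orbG (y : Fin n) with hF
  -- F applied to an r-orbit is the g-orbit of the basepoint
  have hFO : ∀ x : Sc, F (orbR x) = orbG x.1 := by
    intro x
    apply subset_antisymm
    · intro z hz
      simp only [hF, Set.mem_iUnion] at hz
      obtain ⟨y, ⟨m, rfl⟩, hz⟩ := hz
      obtain ⟨j, -, hj⟩ := rmap_fwd g hg m x
      refine Set.mem_of_mem_of_subset hz (orb_mono g ⟨j, hj.symm⟩)
    · intro z hz
      simp only [hF, Set.mem_iUnion]
      exact ⟨x, ⟨0, rfl⟩, hz⟩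
  -- injectivity of F on the set of r-orbits of core points
  have hinj : Set.InjOn F (orbR '' {x | inCore r x}) := by
    rintro O ⟨x, -, rfl⟩ O' ⟨x', -, rfl⟩ h
    rw [hFO, hFO] at h
    exact orbR_eq g hg x x' h
  -- image equality
  have himg : (fun x : Sc => orbG x.1) '' {x | inCore r x} = orbG '' {x | inCore g x} := by
    apply subset_antisymm
    · rintro O ⟨x, hx, rfl⟩
      exact ⟨x.1, coreR_to_G g hg x hx, rfl⟩
    · rintro O ⟨y, hy, rfl⟩
      by_cases hyk : k ≤ (y : ℕ)
      · exact ⟨⟨y, hyk⟩, coreG_to_R g hg ⟨y, hyk⟩ hy, rfl⟩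
      · obtain ⟨j, hj1, hj⟩ := hy
        have hgy : k ≤ ((g y : Fin n) : ℕ) := hg y (lt_of_not_ge hyk)
        have hyorb : y ∈ orbG (g y) := by
          obtain ⟨j', rfl⟩ : ∃ j', j = j' + 1 := ⟨j - 1, by omega⟩
          exact ⟨j', by rw [← Function.iterate_succ_apply g j' y, hj]⟩
        have horb : orbG (g y) = orbG y :=
          subset_antisymm (orb_mono g ⟨1, rfl⟩) (orb_mono g hyorb)
        have hcore : inCore g (g y) :=
          ⟨j, hj1, by rw [← Function.iterate_succ_apply g j y,
            Function.iterate_succ_apply' g j y, hj]⟩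
        exact ⟨⟨g y, hgy⟩, coreG_to_R g hg ⟨g y, hgy⟩ hcore, horb⟩
  calc cycleCount r = (orbR '' {x | inCore r x}).ncard := rfl
    _ = (F '' (orbR '' {x | inCore r x})).ncard := (Set.ncard_image_of_injOn hinj).symm
    _ = ((fun x : Sc => orbG x.1) '' {x | inCore r x}).ncard := by
        rw [Set.image_image]
        congr 1
        exact Set.image_congr fun x _ => hFO x
    _ = (orbG '' {x | inCore g x}).ncard := by rw [himg]
    _ = cycleCount g := rfl
end

section
/- Let 1 ≤ k < n, S = {1,…,k}, S^c = {k+1,…,n}. Let F be a uniformly random function from {1,…,n} to {1,…,n} conditioned on F(S) ⊆ S^c, and let Ñ be the number of x ∈ S^c such that x ∉ F(S) and F(x) ∉ S. Then for all s ≥ 0, P(Ñ > (1+s)·E[Ñ]) ≤ exp(−s²·E[Ñ]/(2+s)). -/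
open scoped Classical

/-- `NSfun n k f` : the number of vertices `x ∈ Sᶜ` not adjacent to any vertex of
`S = {x | (x : ℕ) < k}` in the undirected functional graph of `f`. -/
noncomputable def NSfun (n k : ℕ) (f : Fin n → Fin n) : ℕ :=
  Set.ncard {x : Fin n | k ≤ (x : ℕ) ∧ k ≤ (f x : ℕ) ∧
    ∀ s : Fin n, (s : ℕ) < k → f s ≠ x}

/-- The finite set of functions `f : Fin n → Fin n` with `f(S) ⊆ Sᶜ`,
where `S = {x | (x : ℕ) < k}`. -/
noncomputable def condMaps (n k : ℕ) : Finset (Fin n → Fin n) :=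
  Finset.univ.filter (fun f => ∀ x : Fin n, (x : ℕ) < k → k ≤ (f x : ℕ))

/-- Probability of an event under the uniform distribution on `condMaps n k`. -/
noncomputable def condPr (n k : ℕ) (P : (Fin n → Fin n) → Prop) : ℝ :=
  (((condMaps n k).filter P).card : ℝ) / (condMaps n k).card

/-- Expectation of `NSfun n k` under the uniform distribution on `condMaps n k`. -/
noncomputable def condEN (n k : ℕ) : ℝ :=
  (∑ f ∈ condMaps n k, (NSfun n k f : ℝ)) / (condMaps n k).card

namespace MCUT

lemma key_exp (s : ℝ) (hs : 0 ≤ s) : Real.exp (2*s/(2+s)) ≤ 1 + s := by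
  rw [← Real.le_log_iff_exp_le (by linarith)]
  set f : ℝ → ℝ := fun x => Real.log (1+x) - 2*x/(2+x) with hf
  have hderiv : ∀ x : ℝ, 0 < x → HasDerivAt f (1/(1+x) - 4/(2+x)^2) x := by
    intro x hx0
    have h1 : HasDerivAt (fun y : ℝ => Real.log (1+y)) (1/(1+x)) x := by
      have := ((hasDerivAt_id x).const_add 1).log (by simp; linarith)
      simpa using this
    have h2 : HasDerivAt (fun y : ℝ => 2*y/(2+y)) (4/(2+x)^2) x := by
      have hne : (2+x) ≠ 0 := by linarith
      have := (((hasDerivAt_id x).const_mul 2).div ((hasDerivAt_id x).const_add 2) hne)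
      exact this.congr_deriv (by simp only [id]; ring)
    exact h1.sub h2
  have hmono : MonotoneOn f (Set.Ici 0) := by
    have hc : ContinuousOn f (Set.Ici 0) := by
      apply ContinuousOn.sub
      · exact (Real.continuousOn_log.comp (by fun_prop)
          (fun x hx => by simp at hx ⊢; intro h; linarith))
      · apply ContinuousOn.div (by fun_prop) (by fun_prop)
        intro x hx; simp at hx; intro h; linarith
    apply monotoneOn_of_deriv_nonneg (convex_Ici 0) hc
    · intro x hx
      rw [interior_Ici] at hx
      exact ((hderiv x hx).differentiableAt).differentiableWithinAt
    · intro x hx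
      rw [interior_Ici] at hx
      have hx0 : (0:ℝ) < x := hx
      rw [(hderiv x hx0).deriv]
      rw [sub_nonneg, div_le_div_iff₀ (by positivity) (by linarith)]
      nlinarith
  have h0 : f 0 ≤ f s := hmono (by simp) (by simpa using hs) hs
  have : f 0 = 0 := by simp [hf]
  rw [this] at h0
  simp only [hf] at h0
  linarith

noncomputable def Uset (n k : ℕ) : Finset (Fin n) :=
  Finset.univ.filter (fun x => k ≤ (x : ℕ))

def good (k : ℕ) {n : ℕ} (f : Fin n → Fin n) (x : Fin n) : Prop :=
  k ≤ (f x : ℕ) ∧ ∀ s : Fin n, (s : ℕ) < k → f s ≠ x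

lemma card_lt_filter (n k : ℕ) (h : k ≤ n) :
    (Finset.univ.filter (fun x : Fin n => (x : ℕ) < k)).card = k := by
  rw [show (Finset.univ.filter (fun x : Fin n => (x : ℕ) < k))
      = Finset.image (Fin.castLE h) Finset.univ by
    ext x
    simp only [Finset.mem_filter, Finset.mem_univ, true_and, Finset.mem_image]
    constructor
    · intro hx; exact ⟨⟨(x : ℕ), hx⟩, by simp [Fin.ext_iff]⟩
    · rintro ⟨y, -, rfl⟩; simpa using y.isLt]
  rw [Finset.card_image_of_injective _ (Fin.castLE_injective h)]
  simp

lemma card_Uset (n k : ℕ) (h : k ≤ n) : (Uset n k).card = n - k := by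
  have : Uset n k = (Finset.univ.filter (fun x : Fin n => (x : ℕ) < k))ᶜ := by
    ext x; simp [Uset, not_lt]
  rw [this, Finset.card_compl, card_lt_filter n k h]
  simp

lemma NSfun_eq (n k : ℕ) (f : Fin n → Fin n) :
    NSfun n k f = ((Uset n k).filter (good k f)).card := by
  rw [NSfun, Set.ncard_eq_toFinset_card']
  simp only [Set.toFinset_setOf]
  rw [Uset, Finset.filter_filter]
  congr 1
  ext x
  simp only [Finset.mem_filter]
  simp [good, and_assoc]

noncomputable def cnt (n k : ℕ) (A : Finset (Fin n)) : ℕ :=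
  ((condMaps n k).filter (fun f => ∀ x ∈ A, good k f x)).card

lemma cnt_eq (n k : ℕ) (hkn : k < n) (A : Finset (Fin n))
    (hA : A ⊆ Uset n k) :
    cnt n k A = (n - k - A.card) ^ k * (n - k) ^ A.card * n ^ (n - k - A.card) := by
  classical
  set U := Uset n k with hU
  set T : Fin n → Finset (Fin n) := fun i =>
    if (i : ℕ) < k then U \ A else if i ∈ A then U else Finset.univ with hT
  have hstep : (condMaps n k).filter (fun f => ∀ x ∈ A, good k f x)
      = Fintype.piFinset T := by
    ext f
    simp only [condMaps, Finset.mem_filter]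
    simp only [Fintype.mem_piFinset, condMaps, Finset.mem_filter, Finset.mem_univ,
      true_and, good]
    constructor
    · rintro ⟨hc, hg⟩ i
      by_cases hi : (i : ℕ) < k
      · simp only [hT, hi, if_pos]
        refine Finset.mem_sdiff.2 ⟨by simp [hU, Uset, hc i hi], ?_⟩
        intro hmem
        exact (hg _ hmem).2 i hi rfl
      · by_cases hiA : i ∈ A
        · simpa [hT, hi, hiA, hU, Uset] using (hg _ hiA).1
        · simp [hT, hi, hiA]
    · intro h
      constructor
      · intro x hx
        have := h x
        simp only [hT, hx, if_pos] at this
        have := Finset.mem_sdiff.1 this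
        simpa [hU, Uset] using this.1
      · intro x hx
        have hxk : ¬ ((x : ℕ) < k) := by
          have := hA hx
          simp only [hU, Uset, Finset.mem_filter] at this
          omega
        constructor
        · have := h x
          simpa [hT, hxk, hx, hU, Uset] using this
        · intro t ht
          have := h t
          simp only [hT, ht, if_pos] at this
          have := (Finset.mem_sdiff.1 this).2
          intro heq; exact this (heq ▸ hx)
  rw [cnt, hstep, Fintype.card_piFinset]
  have hsplit := Finset.prod_filter_mul_prod_filter_not Finset.univ
    (fun i : Fin n => (i : ℕ) < k) (fun i => (T i).card)
  rw [← hsplit]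
  have hUcompl : Finset.univ.filter (fun i : Fin n => ¬ (i : ℕ) < k) = U := by
    rw [hU, Uset]; ext x; simp [not_lt]
  have hcardU : U.card = n - k := card_Uset n k hkn.le
  have hcardUA : (U \ A).card = n - k - A.card := by
    rw [Finset.card_sdiff_of_subset hA, hcardU]
  have h1 : ∏ i ∈ Finset.univ.filter (fun i : Fin n => (i : ℕ) < k), (T i).card
      = (n - k - A.card) ^ k := by
    have hcong : ∀ i ∈ Finset.univ.filter (fun i : Fin n => (i : ℕ) < k),
        (T i).card = n - k - A.card := by
      intro i hi
      simp only [Finset.mem_filter] at hi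
      simp [hT, hi.2, hcardUA]
    rw [Finset.prod_congr rfl hcong, Finset.prod_const, card_lt_filter n k hkn.le]
  have h2 : ∏ i ∈ Finset.univ.filter (fun i : Fin n => ¬ (i : ℕ) < k), (T i).card
      = (n - k) ^ A.card * n ^ (n - k - A.card) := by
    rw [hUcompl, ← Finset.prod_sdiff hA]
    have hA1 : ∏ i ∈ A, (T i).card = (n - k) ^ A.card := by
      have hcong : ∀ i ∈ A, (T i).card = n - k := by
        intro i hi
        have hik : ¬ ((i : ℕ) < k) := by
          have := hA hi; simp only [hU, Uset, Finset.mem_filter] at this; omega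
        simp [hT, hik, hi, hcardU]
      rw [Finset.prod_congr rfl hcong, Finset.prod_const]
    have hA2 : ∏ i ∈ U \ A, (T i).card = n ^ (n - k - A.card) := by
      have hcong : ∀ i ∈ U \ A, (T i).card = n := by
        intro i hi
        have hi' := Finset.mem_sdiff.1 hi
        have hik : ¬ ((i : ℕ) < k) := by
          have := hi'.1; simp only [hU, Uset, Finset.mem_filter] at this; omega
        simp [hT, hik, hi'.2]
      rw [Finset.prod_congr rfl hcong, Finset.prod_const, hcardUA]
    rw [hA1, hA2]; ring
  rw [h1, h2]; ring

end MCUT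

open MCUT in
theorem mapping_concentration_upper_tail (n k : ℕ) (hk : 1 ≤ k) (hkn : k < n)
    (s : ℝ) (hs : 0 ≤ s) :
    condPr n k (fun f => (NSfun n k f : ℝ) > (1 + s) * condEN n k) ≤
      Real.exp (-(s ^ 2 * condEN n k / (2 + s))) := by
  classical
  set m := n - k with hmdef
  have hm1 : 1 ≤ m := by omega
  have hn1 : 1 ≤ n := by omega
  have hmn : m ≤ n := by omega
  have hUcard : (Uset n k).card = m := card_Uset n k hkn.le
  -- cardinality of condMaps
  have hcnt0 : cnt n k (∅ : Finset (Fin n)) = (condMaps n k).card := by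
    rw [cnt]
    congr 1
    apply Finset.filter_true_of_mem
    intro f _; simp
  have hD : (condMaps n k).card = m ^ k * n ^ m := by
    have h := cnt_eq n k hkn ∅ (by simp)
    simpa [hcnt0] using h
  have hDpos : 0 < (condMaps n k).card := by
    rw [hD]; positivity
  set D : ℝ := ((condMaps n k).card : ℝ) with hDdef
  have hDposR : (0:ℝ) < D := by rw [hDdef]; exact_mod_cast hDpos
  have hmR : (1:ℝ) ≤ (m:ℝ) := by exact_mod_cast hm1
  have hnR : (0:ℝ) < (n:ℝ) := by exact_mod_cast hn1
  set c : ℕ := m - 1 with hcdef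
  have hcm : m = c + 1 := by omega
  set b : ℝ := ((c : ℕ) : ℝ) / (m : ℝ) with hbdef
  have hb0 : 0 ≤ b := by positivity
  set ρ : ℝ := b ^ k * ((m:ℝ) / n) with hρdef
  have hρ0 : 0 ≤ ρ := by positivity
  have hb_eq : b = 1 - 1/(m:ℝ) := by
    rw [hbdef, hcdef, Nat.cast_sub hm1]
    field_simp
    norm_num
  -- Bernoulli bound
  have hbern : ∀ a : ℕ, a ≤ m → ((m - a : ℕ) : ℝ) ≤ (m:ℝ) * b ^ a := by
    intro a ha
    have h1 : (1:ℝ) + a * (-(1/(m:ℝ))) ≤ (1 + (-(1/(m:ℝ)))) ^ a := by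
      apply one_add_mul_le_pow
      have : (0:ℝ) < 1/(m:ℝ) := by positivity
      linarith
    have h2 : (1:ℝ) + (-(1/(m:ℝ))) = b := by rw [hb_eq]; ring
    rw [h2] at h1
    have h3 : (m:ℝ) * ((1:ℝ) + a * (-(1/(m:ℝ)))) ≤ (m:ℝ) * b ^ a :=
      mul_le_mul_of_nonneg_left h1 (by linarith)
    calc ((m - a : ℕ) : ℝ) = (m:ℝ) - a := by
          rw [Nat.cast_sub ha]
      _ = (m:ℝ) * ((1:ℝ) + a * (-(1/(m:ℝ)))) := by
          field_simp; ring
      _ ≤ (m:ℝ) * b ^ a := h3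
  -- main ratio bound
  have key_ratio : ∀ A : Finset (Fin n), A ⊆ Uset n k →
      (cnt n k A : ℝ) ≤ ρ ^ A.card * D := by
    intro A hA
    set a := A.card with hadef
    have haM : a ≤ m := by
      rw [hadef, ← hUcard]; exact Finset.card_le_card hA
    have hRHS : ρ ^ a * D = (m:ℝ)^k * ((b:ℝ)^a)^k * ((m:ℝ)^a * (n:ℝ)^(m-a)) := by
      rw [hρdef, hDdef, hD]
      have hpow : ((n:ℝ))^m = (n:ℝ)^(m-a) * (n:ℝ)^a := by
        rw [← pow_add]; congr 1; omega
      push_cast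
      rw [hpow]
      have hnne : (n:ℝ) ≠ 0 := ne_of_gt hnR
      have hmne : (m:ℝ) ≠ 0 := by linarith
      rw [hbdef]
      field_simp
      ring_nf
      rw [mul_assoc _ ((n:ℝ)^a), ← mul_pow, mul_inv_cancel₀ hnne, one_pow, mul_one]
    rw [cnt_eq n k hkn A hA, hRHS]
    push_cast
    have h1 : ((m - a : ℕ) : ℝ)^k ≤ ((m:ℝ) * b^a)^k := by
      apply pow_le_pow_left₀ (by positivity) (hbern a haM)
    have h2 : ((m:ℝ) * b^a)^k = (m:ℝ)^k * (b^a)^k := mul_pow _ _ _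
    calc ((m-a:ℕ):ℝ)^k * (m:ℝ)^a * (n:ℝ)^(m-a)
        ≤ ((m:ℝ)^k * (b^a)^k) * ((m:ℝ)^a * (n:ℝ)^(m-a)) := by
          rw [← h2, mul_assoc]
          exact mul_le_mul_of_nonneg_right h1 (by positivity)
      _ = (m:ℝ)^k * (b^a)^k * ((m:ℝ)^a * (n:ℝ)^(m-a)) := by ring
  -- expectation
  have hsingle : ∀ x ∈ Uset n k,
      (((condMaps n k).filter (fun f => good k f x)).card : ℕ)
        = c^k * m * n^(m-1) := by
    intro x hx
    have h := cnt_eq n k hkn {x} (Finset.singleton_subset_iff.2 hx)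
    simp only [Finset.card_singleton, pow_one] at h
    have e1 : n - k - 1 = c := by omega
    have e2 : n - k = m := by omega
    rw [e1, e2, cnt] at h
    rw [← h]
    congr 1
    apply Finset.filter_congr
    intro f _
    simp
  have hμ : condEN n k = (m:ℝ) * ρ := by
    rw [condEN]
    have hsum : (∑ f ∈ condMaps n k, (NSfun n k f : ℝ))
        = (m:ℝ) * ((c^k * m * n^(m-1) : ℕ) : ℝ) := by
      have h1 : ∀ f ∈ condMaps n k, (NSfun n k f : ℝ)
          = ∑ x ∈ Uset n k, (if good k f x then (1:ℝ) else 0) := by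
        intro f _
        rw [NSfun_eq, Finset.card_filter]
        push_cast
        rfl
      rw [Finset.sum_congr rfl h1, Finset.sum_comm]
      have h2 : ∀ x ∈ Uset n k,
          (∑ f ∈ condMaps n k, (if good k f x then (1:ℝ) else 0))
            = ((c^k * m * n^(m-1) : ℕ) : ℝ) := by
        intro x hx
        rw [Finset.sum_boole, hsingle x hx]
      rw [Finset.sum_congr rfl h2, Finset.sum_const, hUcard, nsmul_eq_mul]
    rw [hsum, hD]
    have hpow : ((n:ℝ))^m = (n:ℝ)^(m-1) * (n:ℝ) := by
      rw [pow_sub_one_mul (by omega : m ≠ 0)]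
    rw [hρdef, hbdef]
    push_cast
    rw [hpow]
    have hmne : (m:ℝ) ≠ 0 := by linarith
    have hnne : (n:ℝ) ≠ 0 := ne_of_gt hnR
    field_simp
    ring_nf
    rw [mul_assoc, ← mul_pow, mul_inv_cancel₀ hmne, one_pow, mul_one]
  set μ : ℝ := condEN n k with hμdef
  have hμ0 : 0 ≤ μ := by rw [hμ]; positivity
  -- MGF setup
  set t : ℝ := 2*s/(2+s) with htdef
  have ht0 : 0 ≤ t := by positivity
  set lam : ℝ := Real.exp t - 1 with hlamdef
  have hlam0 : 0 ≤ lam := by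
    rw [hlamdef]; simp [Real.one_le_exp_iff.2 ht0]
  -- MGF expansion
  have hexpand : ∀ f, Real.exp (t * (NSfun n k f : ℝ))
      = ∑ A ∈ (Uset n k).powerset,
          lam ^ A.card * (if (∀ x ∈ A, good k f x) then (1:ℝ) else 0) := by
    intro f
    have hN : ((NSfun n k f : ℝ)) = ∑ x ∈ Uset n k, (if good k f x then (1:ℝ) else 0) := by
      rw [NSfun_eq, Finset.card_filter]
      push_cast
      rfl
    rw [hN, Finset.mul_sum, Real.exp_sum]
    have hterm : ∀ x ∈ Uset n k, Real.exp (t * (if good k f x then (1:ℝ) else 0))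
        = lam * (if good k f x then (1:ℝ) else 0) + 1 := by
      intro x _
      split_ifs with h
      · rw [mul_one, mul_one, hlamdef]; ring
      · simp
    rw [Finset.prod_congr rfl hterm, Finset.prod_add]
    apply Finset.sum_congr rfl
    intro A hA
    rw [Finset.prod_const_one, mul_one, Finset.prod_mul_distrib, Finset.prod_const,
      Finset.prod_boole]
    congr 1
    convert rfl using 2
  have hsum_exp : ∑ f ∈ condMaps n k, Real.exp (t * (NSfun n k f : ℝ))
      = ∑ A ∈ (Uset n k).powerset, lam ^ A.card * (cnt n k A : ℝ) := by
    rw [Finset.sum_congr rfl (fun f _ => hexpand f), Finset.sum_comm]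
    apply Finset.sum_congr rfl
    intro A hA
    rw [← Finset.mul_sum, Finset.sum_boole, cnt]
  have hMGF : ∑ f ∈ condMaps n k, Real.exp (t * (NSfun n k f : ℝ))
      ≤ Real.exp (lam * μ) * D := by
    rw [hsum_exp]
    have h3 : ∑ A ∈ (Uset n k).powerset, lam ^ A.card * (cnt n k A : ℝ)
        ≤ ∑ A ∈ (Uset n k).powerset, (lam * ρ) ^ A.card * D := by
      apply Finset.sum_le_sum
      intro A hA
      have hA' : A ⊆ Uset n k := Finset.mem_powerset.1 hA
      calc lam ^ A.card * (cnt n k A : ℝ)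
          ≤ lam ^ A.card * (ρ ^ A.card * D) :=
            mul_le_mul_of_nonneg_left (key_ratio A hA') (by positivity)
        _ = (lam * ρ) ^ A.card * D := by rw [← mul_assoc, ← mul_pow]
    have h4 : ∑ A ∈ (Uset n k).powerset, (lam * ρ) ^ A.card * D
        = (lam * ρ + 1) ^ m * D := by
      rw [← Finset.sum_mul]
      congr 1
      have := Finset.prod_add (fun _ : Fin n => lam * ρ) (fun _ => (1:ℝ)) (Uset n k)
      rw [Finset.prod_const, hUcard] at this
      rw [this]
      apply Finset.sum_congr rfl
      intro A _
      rw [Finset.prod_const, Finset.prod_const_one, mul_one]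
    have h5 : (lam * ρ + 1) ^ m ≤ Real.exp (lam * μ) := by
      calc (lam * ρ + 1) ^ m ≤ (Real.exp (lam * ρ)) ^ m := by
            apply pow_le_pow_left₀ (by positivity) (Real.add_one_le_exp _)
        _ = Real.exp ((m:ℕ) * (lam * ρ)) := by rw [← Real.exp_nat_mul]
        _ = Real.exp (lam * μ) := by rw [hμ]; congr 1; ring
    calc ∑ A ∈ (Uset n k).powerset, lam ^ A.card * (cnt n k A : ℝ)
        ≤ (lam * ρ + 1) ^ m * D := h3.trans (le_of_eq h4)
      _ ≤ Real.exp (lam * μ) * D :=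
          mul_le_mul_of_nonneg_right h5 (le_of_lt hDposR)
  -- Markov
  set P : (Fin n → Fin n) → Prop := fun f => (NSfun n k f : ℝ) > (1 + s) * μ with hPdef
  have hMarkov : (((condMaps n k).filter P).card : ℝ) * Real.exp (t * ((1+s)*μ))
      ≤ ∑ f ∈ condMaps n k, Real.exp (t * (NSfun n k f : ℝ)) := by
    calc (((condMaps n k).filter P).card : ℝ) * Real.exp (t * ((1+s)*μ))
        = ∑ _f ∈ (condMaps n k).filter P, Real.exp (t * ((1+s)*μ)) := by
          rw [Finset.sum_const, nsmul_eq_mul]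
      _ ≤ ∑ f ∈ (condMaps n k).filter P, Real.exp (t * (NSfun n k f : ℝ)) := by
          apply Finset.sum_le_sum
          intro f hf
          have hfP : (NSfun n k f : ℝ) > (1 + s) * μ := (Finset.mem_filter.1 hf).2
          apply Real.exp_le_exp.2
          apply mul_le_mul_of_nonneg_left (le_of_lt hfP) ht0
      _ ≤ ∑ f ∈ condMaps n k, Real.exp (t * (NSfun n k f : ℝ)) := by
          apply Finset.sum_le_sum_of_subset_of_nonneg (Finset.filter_subset _ _)
          intro f _ _
          positivity
  -- assemble
  have hfinal : condPr n k P ≤ Real.exp (lam * μ - t * ((1+s)*μ)) := by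
    rw [condPr, ← hDdef]
    rw [div_le_iff₀ hDposR]
    have hE1 : (0:ℝ) < Real.exp (t * ((1+s)*μ)) := Real.exp_pos _
    rw [← mul_le_mul_iff_left₀ hE1]
    calc (((condMaps n k).filter P).card : ℝ) * Real.exp (t * ((1+s)*μ))
        ≤ Real.exp (lam * μ) * D := hMarkov.trans hMGF
      _ = Real.exp (lam * μ - t * ((1+s)*μ)) * D * Real.exp (t * ((1+s)*μ)) := by
          rw [mul_right_comm, ← Real.exp_add, sub_add_cancel]
  have hexp_le : lam * μ - t * ((1+s)*μ) ≤ -(s^2 * μ / (2+s)) := by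
    have h2s : (0:ℝ) < 2 + s := by linarith
    have hkey : Real.exp t ≤ 1 + s := key_exp s hs
    have hident : t * (1+s) - s^2/(2+s) = s := by
      rw [htdef]; field_simp; ring
    have hc : lam - t * (1+s) ≤ -(s^2/(2+s)) := by
      rw [hlamdef]
      have : Real.exp t - 1 ≤ s := by linarith
      linarith [hident]
    calc lam * μ - t * ((1+s)*μ) = (lam - t*(1+s)) * μ := by ring
      _ ≤ (-(s^2/(2+s))) * μ := mul_le_mul_of_nonneg_right hc hμ0
      _ = -(s^2 * μ / (2+s)) := by ring
  calc condPr n k P ≤ Real.exp (lam * μ - t * ((1+s)*μ)) := hfinal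
    _ ≤ Real.exp (-(s^2 * μ / (2+s))) := Real.exp_le_exp.2 hexp_le
end
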